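/- arXiv:2402.18580 — 4 statements merged into one kernel-verified Lean document; each statement's English description precedes it below -/
import Mathlib

section
/- Let Λ be a k-algebra, V a left Λ-module, and suppose there is a short exact sequence 0 → V →ι P →π V → 0 of Λ-modules with P projective. Then P acquires the structure of a module over k[ε] ⊗_k Λ (ε^2 = 0), where ε acts by ι∘π, and this module is free as a k[ε]-module with P/εP ≅ V. -/
open scoped TensorProduct

section EpsModule

variable {R M : Type} [Ring R] [AddCommGroup M] [Module R M]

/-- The scalar action of `R[ε]` on `M` induced by a square-zero endomorphism `f`. -/
def epsSMul (f : M →ₗ[R] M) : SMul (DualNumber R) M :=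
  ⟨fun a x => a.fst • x + a.snd • f x⟩

/-- The `R[ε]`-module structure on `M` induced by a square-zero endomorphism `f`. -/
def epsModule (f : M →ₗ[R] M) (hf : ∀ x, f (f x) = 0) : Module (DualNumber R) M :=
  letI := epsSMul f
  have key : ∀ (a : DualNumber R) (x : M), a • x = a.fst • x + a.snd • f x := fun _ _ => rfl
  { smul := fun a x => a.fst • x + a.snd • f x
    one_smul := fun x => by erw [key]; simp
    mul_smul := fun a b x => by
      erw [key, key, key]
      simp only [TrivSqZeroExt.fst_mul, TrivSqZeroExt.snd_mul, smul_eq_mul,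
        MulOpposite.smul_eq_mul_unop, MulOpposite.unop_op, map_add, map_smul, hf,
        smul_zero, add_zero, smul_add, add_smul, mul_smul]
      abel
    smul_zero := fun a => by erw [key]; simp
    smul_add := fun a x y => by erw [key, key, key]; simp only [smul_add, map_add]; abel
    add_smul := fun a b x => by
      erw [key, key, key]
      simp only [TrivSqZeroExt.fst_add, TrivSqZeroExt.snd_add, add_smul]
      abel
    zero_smul := fun x => by erw [key]; simp }

theorem epsModule_smul_def (f : M →ₗ[R] M) (hf : ∀ x, f (f x) = 0) (a : DualNumber R) (x : M) :
    letI := epsModule f hf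
    a • x = a.fst • x + a.snd • f x := rfl

theorem epsModule_inl_smul (f : M →ₗ[R] M) (hf : ∀ x, f (f x) = 0) (r : R) (x : M) :
    letI := epsModule f hf
    (TrivSqZeroExt.inl r : DualNumber R) • x = r • x := by
  rw [epsModule_smul_def]
  simp

theorem epsModule_eps_smul (f : M →ₗ[R] M) (hf : ∀ x, f (f x) = 0) (x : M) :
    letI := epsModule f hf
    (DualNumber.eps : DualNumber R) • x = f x := by
  rw [epsModule_smul_def]
  rw [DualNumber.fst_eps, DualNumber.snd_eps, zero_smul, one_smul, zero_add]

/-- `R ⊆ R[ε]` scalar tower for `epsModule`. -/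
theorem epsModule_isScalarTower (f : M →ₗ[R] M) (hf : ∀ x, f (f x) = 0) :
    letI := epsModule f hf
    IsScalarTower R (DualNumber R) M := by
  letI := epsModule f hf
  constructor
  intro r a x
  rw [epsModule_smul_def, epsModule_smul_def]
  simp only [TrivSqZeroExt.fst_smul, TrivSqZeroExt.snd_smul, smul_eq_mul, smul_add, mul_smul]

end EpsModule

section Free

variable {k V P : Type} [Field k] [AddCommGroup V] [Module k V]
  [AddCommGroup P] [Module k P]

theorem free_epsModule (ι : V →ₗ[k] P) (π : P →ₗ[k] V)
    (hι : Function.Injective ι) (hπ : Function.Surjective π)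
    (hexact : LinearMap.range ι = LinearMap.ker π)
    (hf : ∀ x : P, (ι.comp π) ((ι.comp π) x) = 0) :
    letI := epsModule (ι.comp π) hf
    Module.Free (DualNumber k) P := by
  letI := epsModule (ι.comp π) hf
  letI := epsModule_isScalarTower (ι.comp π) hf
  obtain ⟨s, hs⟩ := π.exists_rightInverse_of_surjective (LinearMap.range_eq_top.2 hπ)
  obtain ⟨ρ, hρ⟩ := ι.exists_leftInverse_of_injective (LinearMap.ker_eq_bot.2 hι)
  have hπs : ∀ v, π (s v) = v := fun v => LinearMap.congr_fun hs v
  have hρι : ∀ v, ρ (ι v) = v := fun v => LinearMap.congr_fun hρ v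
  have hπι : ∀ v, π (ι v) = 0 := by
    intro v
    have : ι v ∈ LinearMap.ker π := hexact ▸ LinearMap.mem_range_self ι v
    exact this
  have hιρ : ∀ z : P, π z = 0 → ι (ρ z) = z := by
    intro z hz
    obtain ⟨u, rfl⟩ : z ∈ LinearMap.range ι := hexact.symm ▸ hz
    rw [hρι]
  have heps : ∀ v, (DualNumber.eps : DualNumber k) • s v = ι v := by
    intro v
    rw [epsModule_eps_smul]
    simp [hπs]
  -- the base-change map
  set F : DualNumber k ⊗[k] V →ₗ[DualNumber k] P := s.liftBaseChange (DualNumber k) with hF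
  -- the inverse
  set G : P →ₗ[k] DualNumber k ⊗[k] V :=
    ((TensorProduct.mk k (DualNumber k) V) 1).comp π +
    ((TensorProduct.mk k (DualNumber k) V) DualNumber.eps).comp
      (ρ.comp (LinearMap.id - s.comp π)) with hG
  have hGapp : ∀ x : P, G x = (1 : DualNumber k) ⊗ₜ[k] π x +
      (DualNumber.eps : DualNumber k) ⊗ₜ[k] ρ (x - s (π x)) := fun x => rfl
  have hFG : ∀ x : P, F (G x) = x := by
    intro x
    rw [hGapp, map_add, LinearMap.liftBaseChange_tmul, LinearMap.liftBaseChange_tmul,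
      one_smul, heps, hιρ (x - s (π x)) (by simp [hπs])]
    abel
  have hGF : ∀ t : DualNumber k ⊗[k] V, G (F t) = t := by
    have : (G.restrictScalars k).comp ((F.restrictScalars k)) = LinearMap.id := by
      apply TensorProduct.ext'
      intro a v
      simp only [LinearMap.coe_comp, Function.comp_apply, LinearMap.coe_restrictScalars,
        LinearMap.id_coe, id_eq]
      rw [LinearMap.liftBaseChange_tmul]
      have ha : a = a.fst • (1 : DualNumber k) + a.snd • (DualNumber.eps : DualNumber k) := by
        rw [← DualNumber.inr_eq_smul_eps, ← Algebra.algebraMap_eq_smul_one,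
          TrivSqZeroExt.algebraMap_eq_inl']
        simpa using (TrivSqZeroExt.inl_fst_add_inr_snd_eq a).symm
      have hsm : a • s v = a.fst • s v + a.snd • ι v := by
        conv_lhs => rw [ha]
        rw [add_smul, smul_assoc, smul_assoc, one_smul, heps]
      rw [hsm, map_add, map_smul, map_smul, hGapp, hGapp]
      simp only [hπs, hπι, sub_self, map_zero, TensorProduct.tmul_zero, add_zero,
        zero_add, sub_zero, hρι]
      conv_rhs => rw [ha]
      rw [TensorProduct.add_tmul, TensorProduct.smul_tmul', TensorProduct.smul_tmul']
    intro t
    exact LinearMap.congr_fun this t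
  have hbij : Function.Bijective F :=
    ⟨fun t₁ t₂ h => by rw [← hGF t₁, ← hGF t₂, h],
     fun x => ⟨G x, hFG x⟩⟩
  have : Module.Free (DualNumber k) (DualNumber k ⊗[k] V) :=
    Module.Free.of_basis ((Module.Free.chooseBasis k V).baseChange (DualNumber k))
  exact Module.Free.of_equiv (LinearEquiv.ofBijective F hbij)

end Free

/-- Let `Λ` be a finite dimensional `k`-algebra, `V` a finitely generated
`Λ`-module, and `0 → V →ι P →π V → 0` a short exact sequence with `P` projective.  Then
`P` acquires the structure of a module over `k[ε] ⊗_k Λ` (encoded via the isomorphic ring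
`Λ[ε] = DualNumber Λ`) in which `Λ` acts by the original action and `ε` acts by `ι ∘ π`;
this module is free as a `k[ε]`-module (for the corresponding `k[ε]`-structure), and
`P/εP = P/range(ι∘π) ≅ V`. -/
theorem stmt_2 (k : Type) [Field k] (Λ : Type) [Ring Λ] [Algebra k Λ]
    [FiniteDimensional k Λ]
    (V P : Type) [AddCommGroup V] [Module Λ V] [Module.Finite Λ V]
    [AddCommGroup P] [Module Λ P] [Module.Projective Λ P]
    (ι : V →ₗ[Λ] P) (π : P →ₗ[Λ] V)
    (hι : Function.Injective ι) (hπ : Function.Surjective π)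
    (hexact : LinearMap.range ι = LinearMap.ker π) :
    (∃ inst : Module (DualNumber Λ) P,
      letI := inst
      (∀ (a : Λ) (x : P), (TrivSqZeroExt.inl a : DualNumber Λ) • x = a • x) ∧
      (∀ x : P, (DualNumber.eps : DualNumber Λ) • x = ι (π x))) ∧
    (∃ inst : Module (DualNumber k) P,
      letI := inst
      (∀ (c : k) (x : P), (TrivSqZeroExt.inl c : DualNumber k) • x = algebraMap k Λ c • x) ∧
      (∀ x : P, (DualNumber.eps : DualNumber k) • x = ι (π x)) ∧
      Module.Free (DualNumber k) P) ∧
    Nonempty ((P ⧸ LinearMap.range (ι.comp π)) ≃ₗ[Λ] V) := by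
  have hπι : ∀ v, π (ι v) = 0 := by
    intro v
    have : ι v ∈ LinearMap.ker π := hexact ▸ LinearMap.mem_range_self ι v
    exact this
  have hfΛ : ∀ x : P, (ι.comp π) ((ι.comp π) x) = 0 := by
    intro x; simp [hπι]
  refine ⟨⟨epsModule (ι.comp π) hfΛ, epsModule_inl_smul _ hfΛ,
      fun x => epsModule_eps_smul _ hfΛ x⟩, ?_, ?_⟩
  · -- k[ε] part
    letI : Module k V := Module.compHom V (algebraMap k Λ)
    letI : Module k P := Module.compHom P (algebraMap k Λ)
    haveI : IsScalarTower k Λ V :=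
      IsScalarTower.of_algebraMap_smul (fun r x => rfl)
    haveI : IsScalarTower k Λ P :=
      IsScalarTower.of_algebraMap_smul (fun r x => rfl)
    set ιk : V →ₗ[k] P := ι.restrictScalars k with hιk
    set πk : P →ₗ[k] V := π.restrictScalars k with hπk
    have hexk : LinearMap.range ιk = LinearMap.ker πk := by
      ext x
      constructor
      · rintro ⟨v, rfl⟩
        exact hπι v
      · intro hx
        have : x ∈ LinearMap.ker π := hx
        rw [← hexact] at this
        obtain ⟨v, rfl⟩ := this
        exact ⟨v, rfl⟩
    have hfk : ∀ x : P, (ιk.comp πk) ((ιk.comp πk) x) = 0 := by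
      intro x; simp only [LinearMap.comp_apply, LinearMap.coe_restrictScalars, hιk, hπk]
      simp [hπι]
    refine ⟨epsModule (ιk.comp πk) hfk, ?_, ?_, ?_⟩
    · intro c x
      exact epsModule_inl_smul (ιk.comp πk) hfk c x
    · intro x
      exact epsModule_eps_smul (ιk.comp πk) hfk x
    · exact free_epsModule ιk πk hι hπ hexk hfk
  · -- quotient part
    have hr : LinearMap.range (ι.comp π) = LinearMap.ker π := by
      rw [LinearMap.range_comp, LinearMap.range_eq_top.2 hπ, Submodule.map_top, hexact]
    exact ⟨(Submodule.quotEquivOfEq _ _ hr).trans (π.quotKerEquivOfSurjective hπ)⟩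
end

section
/- Let Λ = kQ[ε] with kQ a finite dimensional hereditary algebra and k[ε] the dual numbers. A finitely generated left Λ-module V is torsionless (i.e., embeds into a projective Λ-module) if and only if Ext^1_Λ(V, Λ) = 0. -/
/-- `Ext¹_Λ(V, W) = 0`, expressed by the standard characterization: every short exact
sequence `0 → W → E → V → 0` of `Λ`-modules splits. -/
def Ext1Vanishes (Λ : Type) [Ring Λ] (V : Type) [AddCommGroup V] [Module Λ V]
    (W : Type) [AddCommGroup W] [Module Λ W] : Prop :=
  ∀ (E : Type) (_ : AddCommGroup E) (_ : Module Λ E)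
    (f : W →ₗ[Λ] E) (g : E →ₗ[Λ] V),
    Function.Injective f → Function.Surjective g →
    LinearMap.range f = LinearMap.ker g →
    ∃ s : V →ₗ[Λ] E, g.comp s = LinearMap.id

noncomputable section
namespace Stmt11

variable (k : Type) [Field k] (A : Type) [Ring A] [Algebra k A]

local instance instModDual : Module k (DualNumber k) := Algebra.toModule

abbrev R := TensorProduct k A (DualNumber k)

def jR : A →+* R k A := Algebra.TensorProduct.includeLeftRingHom

def eps : R k A := 1 ⊗ₜ DualNumber.eps

def fstL : DualNumber k →ₗ[k] k :=
  { toFun := TrivSqZeroExt.fst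
    map_add' := fun _ _ => rfl
    map_smul' := fun _ _ => rfl }

def sndL : DualNumber k →ₗ[k] k := TrivSqZeroExt.sndHom k k

def p0 : R k A →ₗ[k] A :=
  (TensorProduct.rid k A).toLinearMap.comp (TensorProduct.map LinearMap.id (fstL k))

def p1 : R k A →ₗ[k] A :=
  (TensorProduct.rid k A).toLinearMap.comp (TensorProduct.map LinearMap.id (sndL k))

@[simp] lemma p0_tmul (a : A) (d : DualNumber k) : p0 k A (a ⊗ₜ d) = d.fst • a := by
  simp [p0, fstL]; rfl

@[simp] lemma p1_tmul (a : A) (d : DualNumber k) : p1 k A (a ⊗ₜ d) = d.snd • a := by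
  simp [p1, sndL]

@[simp] lemma jR_apply (a : A) : jR k A a = a ⊗ₜ 1 := rfl

lemma recon (r : R k A) : jR k A (p0 k A r) + eps k A * jR k A (p1 k A r) = r := by
  induction r using TensorProduct.induction_on with
  | zero => simp
  | tmul a d =>
      simp only [p0_tmul, p1_tmul, jR_apply, eps, Algebra.TensorProduct.tmul_mul_tmul,
        one_mul]
      rw [TensorProduct.smul_tmul, TensorProduct.smul_tmul, ← TensorProduct.tmul_add]
      congr 1
      ext <;> simp
  | add x y hx hy =>
      rw [map_add, map_add, map_add, map_add, mul_add]
      rw [show ∀ (a b c d : R k A), a + b + (c + d) = (a + c) + (b + d) from fun a b c d => by abel]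
      rw [hx, hy]

@[simp] lemma p0_jR (a : A) : p0 k A (jR k A a) = a := by simp
@[simp] lemma p1_jR (a : A) : p1 k A (jR k A a) = 0 := by simp

lemma one_def : (1 : R k A) = (1:A) ⊗ₜ 1 := rfl

@[simp] lemma p0_one : p0 k A 1 = 1 := by rw [one_def]; simp
@[simp] lemma p1_one : p1 k A 1 = 0 := by rw [one_def]; simp

@[simp] lemma eps_mul_eps : eps k A * eps k A = 0 := by
  simp [eps, Algebra.TensorProduct.tmul_mul_tmul]

lemma eps_mul_tmul (a : A) (d : DualNumber k) :
    eps k A * (a ⊗ₜ d) = a ⊗ₜ (DualNumber.eps * d) := by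
  simp [eps, Algebra.TensorProduct.tmul_mul_tmul]

lemma eps_comm (r : R k A) : eps k A * r = r * eps k A := by
  induction r using TensorProduct.induction_on with
  | zero => simp
  | tmul a d =>
      simp [eps, Algebra.TensorProduct.tmul_mul_tmul, mul_comm]
  | add x y hx hy => rw [mul_add, add_mul, hx, hy]

@[simp] lemma p0_eps_mul (r : R k A) : p0 k A (eps k A * r) = 0 := by
  induction r using TensorProduct.induction_on with
  | zero => simp
  | tmul a d => rw [eps_mul_tmul]; simp
  | add x y hx hy => rw [mul_add, map_add, hx, hy, add_zero]

@[simp] lemma p1_eps_mul (r : R k A) : p1 k A (eps k A * r) = p0 k A r := by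
  induction r using TensorProduct.induction_on with
  | zero => simp
  | tmul a d => rw [eps_mul_tmul]; simp
  | add x y hx hy => rw [mul_add, map_add, hx, hy, map_add]

lemma p0_jR_mul (a : A) (r : R k A) : p0 k A (jR k A a * r) = a * p0 k A r := by
  induction r using TensorProduct.induction_on with
  | zero => simp
  | tmul b d => simp [Algebra.TensorProduct.tmul_mul_tmul, mul_smul_comm]
  | add x y hx hy => rw [mul_add, map_add, hx, hy, map_add, mul_add]

lemma p1_jR_mul (a : A) (r : R k A) : p1 k A (jR k A a * r) = a * p1 k A r := by
  induction r using TensorProduct.induction_on with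
  | zero => simp
  | tmul b d => simp [Algebra.TensorProduct.tmul_mul_tmul, mul_smul_comm]
  | add x y hx hy => rw [mul_add, map_add, hx, hy, map_add, mul_add]

lemma p_ext {r s : R k A} (h0 : p0 k A r = p0 k A s) (h1 : p1 k A r = p1 k A s) :
    r = s := by
  rw [← recon k A r, ← recon k A s, h0, h1]

lemma p0_mul (r s : R k A) : p0 k A (r * s) = p0 k A r * p0 k A s := by
  conv_lhs => rw [← recon k A r]
  rw [add_mul, map_add, p0_jR_mul, mul_assoc, p0_eps_mul, add_zero]

lemma p1_mul (r s : R k A) : p1 k A (r * s) = p0 k A r * p1 k A s + p1 k A r * p0 k A s := by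
  conv_lhs => rw [← recon k A r]
  rw [add_mul, map_add, p1_jR_mul, mul_assoc, p1_eps_mul, p0_jR_mul]


section ModuleTools

variable {V W : Type} [AddCommGroup V] [Module (R k A) V]
  [AddCommGroup W] [Module (R k A) W]

lemma smul_decomp (r : R k A) (v : V) :
    r • v = jR k A (p0 k A r) • v + eps k A • (jR k A (p1 k A r) • v) := by
  conv_lhs => rw [← recon k A r]
  rw [add_smul, mul_smul]

/-- Criterion: an additive map commuting with the `A`-part and with `ε` is `R`-linear. -/
def mkRLinear (f : V →+ W)
    (hA : ∀ (a : A) (v : V), f (jR k A a • v) = jR k A a • f v)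
    (hE : ∀ v : V, f (eps k A • v) = eps k A • f v) : V →ₗ[R k A] W :=
  { toFun := f
    map_add' := f.map_add
    map_smul' := by
      intro r v
      simp only [RingHom.id_apply]
      rw [smul_decomp k A r v, smul_decomp k A r (f v), f.map_add, hA, hE, hA]

     }

@[simp] lemma mkRLinear_apply (f : V →+ W) (hA hE) (v : V) :
    mkRLinear k A f hA hE v = f v := rfl

end ModuleTools

section Forward

variable {k A}

set_option maxHeartbeats 1000000 in
set_option synthInstance.maxHeartbeats 400000 in
lemma forward
    (hHer : ∀ (P : Type) (_ : AddCommGroup P) (_ : Module A P),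
      Module.Projective A P → ∀ N : Submodule A P, Module.Projective A N)
    {V : Type} [AddCommGroup V] [Module (R k A) V]
    (hP : ∃ (P : Type) (_ : AddCommGroup P) (_ : Module (R k A) P),
        Module.Finite (R k A) P ∧ Module.Projective (R k A) P ∧
        ∃ ι : V →ₗ[R k A] P, Function.Injective ι) :
    Ext1Vanishes (R k A) V (R k A) := by
  classical
  obtain ⟨P, instP, instMP, finP, projP, ι, hι⟩ := hP
  obtain ⟨n, π, hπ⟩ := Module.Finite.exists_fin' (R k A) P
  obtain ⟨σ, hσ⟩ := Module.projective_lifting_property π LinearMap.id hπ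
  have hσinj : Function.Injective σ := by
    intro x y hxy
    have := congrArg π hxy
    rw [← LinearMap.comp_apply, ← LinearMap.comp_apply, hσ] at this
    simpa using this
  set w : V →ₗ[R k A] (Fin n → R k A) := σ.comp ι with hw
  have hwinj : Function.Injective w := hσinj.comp hι
  letI mAV : Module A V := Module.compHom V (jR k A)
  have hsmulV : ∀ (a : A) (v : V), a • v = jR k A a • v := fun _ _ => rfl
  -- V is a projective A-module
  have projAV : Module.Projective A V := by
    let χ : V →ₗ[A] (Fin n → A × A) :=
      { toFun := fun v i => (p0 k A (w v i), p1 k A (w v i))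
        map_add' := by intro x y; funext i; simp [Prod.ext_iff]
        map_smul' := by
          intro a v
          funext i
          have h1 : w (a • v) i = jR k A a * w v i := by
            rw [hsmulV, map_smul]; rfl
          simp only [RingHom.id_apply, h1, p0_jR_mul, p1_jR_mul]
          rfl }
    have hχ : Function.Injective χ := by
      intro x y hxy
      apply hwinj
      funext i
      have h0 := congrArg (fun z => (z i).1) hxy
      have h1 := congrArg (fun z => (z i).2) hxy
      exact p_ext k A h0 h1
    have projN := hHer (Fin n → A × A) inferInstance inferInstance inferInstance
      (LinearMap.range χ)
    letI : Module.Projective A ↥(LinearMap.range χ) := projN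
    exact Module.Projective.of_equiv (LinearEquiv.ofInjective χ hχ).symm
  -- now split an arbitrary extension
  intro E instE instME f g hf hg hexact
  letI mAE : Module A E := Module.compHom E (jR k A)
  have hsmulE : ∀ (a : A) (x : E), a • x = jR k A a • x := fun _ _ => rfl
  let gA : E →ₗ[A] V :=
    { toFun := g
      map_add' := g.map_add
      map_smul' := fun a x => map_smul g (jR k A a) x }
  obtain ⟨s₀, hs₀⟩ := Module.projective_lifting_property gA LinearMap.id hg
  have hs₀' : ∀ v, g (s₀ v) = v := by
    intro v
    have := congrFun (congrArg (fun (h : V →ₗ[A] V) => (h : V → V)) hs₀) v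
    exact this
  have hker : ∀ x : E, g x = 0 → ∃ r, f r = x := by
    intro x hx
    have : x ∈ LinearMap.ker g := hx
    rw [← hexact] at this
    exact this
  have hgf : ∀ r, g (f r) = 0 := by
    intro r
    have : f r ∈ LinearMap.ker g := hexact ▸ LinearMap.mem_range_self f r
    exact this
  -- the defect
  set θ : V → E := fun v => s₀ (eps k A • v) - eps k A • s₀ v with hθdef
  have hθker : ∀ v, g (θ v) = 0 := by
    intro v
    simp only [hθdef, map_sub, hs₀', map_smul, sub_self]
  have hτ : ∀ v, ∃ r, f r = θ v := fun v => hker _ (hθker v)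
  set τ : V → R k A := fun v => (hτ v).choose with hτdef
  have fτ : ∀ v, f (τ v) = θ v := fun v => (hτ v).choose_spec
  have τ_add : ∀ x y, τ (x + y) = τ x + τ y := by
    intro x y
    apply hf
    rw [map_add, fτ, fτ, fτ, hθdef]
    simp only [smul_add, map_add]
    abel
  have θ_eps : ∀ v, θ (eps k A • v) = -(eps k A • θ v) := by
    intro v
    have h1 : eps k A • (eps k A • v) = (0 : V) := by
      rw [← mul_smul, eps_mul_eps]; exact zero_smul (R k A) v
    have h2 : eps k A • (eps k A • s₀ v) = (0 : E) := by
      rw [← mul_smul, eps_mul_eps]; exact zero_smul (R k A) (s₀ v)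
    simp only [hθdef, h1, map_zero, smul_sub, h2, sub_zero, zero_sub]
  have τ_eps : ∀ v, τ (eps k A • v) = -(eps k A * τ v) := by
    intro v
    apply hf
    rw [fτ, θ_eps, ← fτ v, ← map_smul, map_neg]
    rfl
  have s₀A : ∀ (a : A) (x : V), s₀ (jR k A a • x) = jR k A a • s₀ x :=
    fun a x => map_smul s₀ a x
  have τ_jsmul : ∀ (a : A) (v : V), τ (jR k A a • v) = jR k A a * τ v := by
    intro a v
    apply hf
    rw [fτ]
    have hfj : f (jR k A a * τ v) = jR k A a • f (τ v) := map_smul f (jR k A a) (τ v)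
    rw [hfj, fτ]
    show s₀ (eps k A • (jR k A a • v)) - eps k A • s₀ (jR k A a • v)
      = jR k A a • (s₀ (eps k A • v) - eps k A • s₀ v)
    rw [smul_sub]
    rw [show eps k A • (jR k A a • v) = jR k A a • (eps k A • v) by
      rw [← mul_smul, ← mul_smul, eps_comm]]
    rw [s₀A, s₀A, ← mul_smul, ← mul_smul, eps_comm]
  -- the splitting
  set sfun : V → E := fun v => s₀ v + f (jR k A (p1 k A (τ v))) with hsfun
  have sfun_add : ∀ x y, sfun (x + y) = sfun x + sfun y := by
    intro x y
    simp only [hsfun, map_add, τ_add]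
    abel
  have sfun_A : ∀ (a : A) (v : V), sfun (jR k A a • v) = jR k A a • sfun v := by
    intro a v
    show s₀ (jR k A a • v) + f (jR k A (p1 k A (τ (jR k A a • v))))
      = jR k A a • (s₀ v + f (jR k A (p1 k A (τ v))))
    rw [smul_add, s₀A, τ_jsmul, p1_jR_mul, map_mul]
    congr 1
    exact map_smul f (jR k A a) _
  have sfun_eps : ∀ v, sfun (eps k A • v) = eps k A • sfun v := by
    intro v
    show s₀ (eps k A • v) + f (jR k A (p1 k A (τ (eps k A • v))))
      = eps k A • (s₀ v + f (jR k A (p1 k A (τ v))))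
    rw [smul_add, τ_eps, map_neg, p1_eps_mul, map_neg, map_neg]
    have h2 : eps k A • f (jR k A (p1 k A (τ v))) = f (eps k A * jR k A (p1 k A (τ v))) :=
      (map_smul f (eps k A) _).symm
    rw [h2]
    have hkey : s₀ (eps k A • v) - eps k A • s₀ v
        = f (jR k A (p0 k A (τ v))) + f (eps k A * jR k A (p1 k A (τ v))) := by
      rw [← map_add, recon]
      exact (fτ v).symm
    rw [sub_eq_iff_eq_add.mp hkey]
    abel
  set s : V →ₗ[R k A] E := mkRLinear k A
    { toFun := sfun, map_zero' := by simp [hsfun, show τ 0 = 0 from hf (by rw [fτ]; simp [hθdef])],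
      map_add' := sfun_add } sfun_A sfun_eps with hs
  refine ⟨s, ?_⟩
  ext v
  simp only [LinearMap.comp_apply, LinearMap.id_apply, hs, mkRLinear_apply, AddMonoidHom.coe_mk,
    ZeroHom.coe_mk, hsfun]
  rw [map_add, hs₀', hgf, add_zero]

end Forward

section Coind

variable {k A}

/-- The coinduced module `Hom_A(Λ, X) ≅ X × X` of an `A`-module `X`,
with `Λ = A ⊗ k[ε]` acting by `r • (x₀, x₁) = (p₀ r • x₀ + p₁ r • x₁, p₀ r • x₁)`. -/
def coindModule (X : Type) [AddCommGroup X] [Module A X] : Module (R k A) (X × X) where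
  smul r x := (p0 k A r • x.1 + p1 k A r • x.2, p0 k A r • x.2)
  one_smul x := by
    show (p0 k A 1 • x.1 + p1 k A 1 • x.2, p0 k A 1 • x.2) = x
    simp
  mul_smul r s x := by
    show (p0 k A (r * s) • x.1 + p1 k A (r * s) • x.2, p0 k A (r * s) • x.2)
      = (p0 k A r • (p0 k A s • x.1 + p1 k A s • x.2) + p1 k A r • (p0 k A s • x.2),
         p0 k A r • (p0 k A s • x.2))
    rw [p0_mul, p1_mul]
    refine Prod.ext ?_ ?_
    · show (p0 k A r * p0 k A s) • x.1 + (p0 k A r * p1 k A s + p1 k A r * p0 k A s) • x.2 = _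
      simp only [add_smul, mul_smul, smul_add]
      abel
    · show (p0 k A r * p0 k A s) • x.2 = _
      rw [mul_smul]
  smul_zero r := by
    show (p0 k A r • (0:X) + p1 k A r • (0:X), p0 k A r • (0:X)) = 0
    simp
  smul_add r x y := by
    show (p0 k A r • (x.1 + y.1) + p1 k A r • (x.2 + y.2), p0 k A r • (x.2 + y.2))
      = ((p0 k A r • x.1 + p1 k A r • x.2) + (p0 k A r • y.1 + p1 k A r • y.2),
         p0 k A r • x.2 + p0 k A r • y.2)
    refine Prod.ext ?_ ?_
    · simp only [smul_add]
      abel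
    · simp [smul_add]
  add_smul r s x := by
    refine Prod.ext ?_ ?_
    · show p0 k A (r + s) • x.1 + p1 k A (r + s) • x.2
        = (p0 k A r • x.1 + p1 k A r • x.2) + (p0 k A s • x.1 + p1 k A s • x.2)
      simp only [map_add, add_smul]
      abel
    · show p0 k A (r + s) • x.2 = p0 k A r • x.2 + p0 k A s • x.2
      simp [map_add, add_smul]
  zero_smul x := by
    show (p0 k A 0 • x.1 + p1 k A 0 • x.2, p0 k A 0 • x.2) = 0
    simp

set_option maxHeartbeats 2000000 in
set_option synthInstance.maxHeartbeats 1000000 in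
/-- Every `A`-module extension of (the restriction of) `V` by `A` splits,
provided every `Λ`-module extension of `V` by `Λ` splits. -/
lemma split_A_ext
    {V : Type} [AddCommGroup V] [Module (R k A) V] [Module A V]
    (hc : ∀ (a : A) (v : V), a • v = jR k A a • v)
    (hext : Ext1Vanishes (R k A) V (R k A))
    (E₀ : Type) [AddCommGroup E₀] [Module A E₀]
    (f₀ : A →ₗ[A] E₀) (g₀ : E₀ →ₗ[A] V)
    (hf₀ : Function.Injective f₀) (hg₀ : Function.Surjective g₀)
    (hex₀ : LinearMap.range f₀ = LinearMap.ker g₀) :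
    ∃ s₀ : V →ₗ[A] E₀, ∀ v, g₀ (s₀ v) = v := by
  classical
  have hg₀f₀ : ∀ a, g₀ (f₀ a) = 0 := by
    intro a
    have : f₀ a ∈ LinearMap.ker g₀ := hex₀ ▸ LinearMap.mem_range_self f₀ a
    exact this
  have hdec : ∀ (r : R k A) (v : V),
      r • v = p0 k A r • v + p1 k A r • (eps k A • v) := by
    intro r v
    rw [smul_decomp k A r v, hc, hc]
    congr 1
    rw [← mul_smul, eps_comm, mul_smul]
  have hepsdec : ∀ (r : R k A) (v : V),
      eps k A • (r • v) = p0 k A r • (eps k A • v) := by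
    intro r v
    rw [← mul_smul, hdec (eps k A * r) v, p0_eps_mul, p1_eps_mul, zero_smul, zero_add]
  letI : Module (R k A) (E₀ × E₀) := coindModule E₀
  have hsmul1 : ∀ (r : R k A) (c : E₀ × E₀),
      r • c = (p0 k A r • c.1 + p1 k A r • c.2, p0 k A r • c.2) := fun _ _ => rfl
  -- the pullback of the coinduced extension along `V → Coind V`
  let Em : Submodule (R k A) ((E₀ × E₀) × V) :=
    { carrier := {p | g₀ p.1.1 = p.2 ∧ g₀ p.1.2 = eps k A • p.2}
      add_mem' := by
        rintro ⟨⟨x, y⟩, v⟩ ⟨⟨x', y'⟩, v'⟩ ⟨h1, h2⟩ ⟨h1', h2'⟩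
        refine ⟨?_, ?_⟩
        · show g₀ (x + x') = v + v'
          rw [map_add, h1, h1']
        · show g₀ (y + y') = eps k A • (v + v')
          rw [map_add, h2, h2', smul_add]
      zero_mem' := by
        refine ⟨?_, ?_⟩ <;> show g₀ 0 = _ <;> simp
      smul_mem' := by
        rintro r ⟨⟨x, y⟩, v⟩ ⟨h1, h2⟩
        dsimp only [Set.mem_setOf_eq] at h1 h2 ⊢
        rw [Set.mem_setOf_eq]
        rw [Prod.smul_fst, Prod.smul_snd, hsmul1]
        constructor
        · show g₀ (p0 k A r • x + p1 k A r • y) = r • v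
          rw [map_add, map_smul, map_smul, h1, h2]
          exact (hdec r v).symm
        · show g₀ (p0 k A r • y) = eps k A • (r • v)
          rw [map_smul, h2, hepsdec] }
  have memE : ∀ (p : (E₀ × E₀) × V), p ∈ Em ↔
      (g₀ p.1.1 = p.2 ∧ g₀ p.1.2 = eps k A • p.2) := fun _ => Iff.rfl
  -- the inclusion of Λ ≅ Coind A
  let fE : R k A →ₗ[R k A] Em :=
    { toFun := fun r => ⟨((f₀ (p1 k A r), f₀ (p0 k A r)), 0),
        ⟨by simpa using hg₀f₀ _, by simpa using hg₀f₀ _⟩⟩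
      map_add' := by
        intro r s
        apply Subtype.ext
        show ((f₀ (p1 k A (r + s)), f₀ (p0 k A (r + s))), (0:V))
          = ((f₀ (p1 k A r) + f₀ (p1 k A s), f₀ (p0 k A r) + f₀ (p0 k A s)),
             (0:V) + 0)
        simp
      map_smul' := by
        intro s r
        apply Subtype.ext
        rw [RingHom.id_apply]
        show ((f₀ (p1 k A (s * r)), f₀ (p0 k A (s * r))), (0:V))
          = (s • (f₀ (p1 k A r), f₀ (p0 k A r)), s • (0:V))
        rw [hsmul1, smul_zero]
        refine Prod.ext (Prod.ext ?_ ?_) rfl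
        · show f₀ (p1 k A (s * r)) = p0 k A s • f₀ (p1 k A r) + p1 k A s • f₀ (p0 k A r)
          rw [p1_mul, map_add]
          exact congrArg₂ (· + ·) (map_smul f₀ _ _) (map_smul f₀ _ _)
        · show f₀ (p0 k A (s * r)) = p0 k A s • f₀ (p0 k A r)
          rw [p0_mul]
          exact map_smul f₀ _ _ }
  have hfE : Function.Injective fE := by
    intro r s hrs
    have h := congrArg (fun z : Em => z.val) hrs
    have h1 : f₀ (p1 k A r) = f₀ (p1 k A s) := congrArg (fun z => z.1.1) h
    have h0 : f₀ (p0 k A r) = f₀ (p0 k A s) := congrArg (fun z => z.1.2) h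
    exact p_ext k A (hf₀ h0) (hf₀ h1)
  let gE : Em →ₗ[R k A] V :=
    { toFun := fun e => e.val.2
      map_add' := fun _ _ => rfl
      map_smul' := fun _ _ => rfl }
  have hgE : Function.Surjective gE := by
    intro v
    obtain ⟨x, hx⟩ := hg₀ v
    obtain ⟨y, hy⟩ := hg₀ (eps k A • v)
    exact ⟨⟨((x, y), v), ⟨hx, hy⟩⟩, rfl⟩
  have hexE : LinearMap.range fE = LinearMap.ker gE := by
    apply le_antisymm
    · rintro e ⟨r, rfl⟩
      show (0 : V) = 0
      rfl
    · rintro ⟨⟨⟨x, y⟩, v⟩, hmem⟩ hv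
      have hv0 : v = 0 := hv
      subst hv0
      obtain ⟨h1, h2⟩ := hmem
      rw [smul_zero] at h2
      have hx : x ∈ LinearMap.range f₀ := hex₀ ▸ (h1 : g₀ x = 0)
      have hy : y ∈ LinearMap.range f₀ := hex₀ ▸ (h2 : g₀ y = 0)
      obtain ⟨a, rfl⟩ := hx
      obtain ⟨b, rfl⟩ := hy
      refine ⟨jR k A b + eps k A * jR k A a, ?_⟩
      apply Subtype.ext
      show ((f₀ (p1 k A (jR k A b + eps k A * jR k A a)),
             f₀ (p0 k A (jR k A b + eps k A * jR k A a))), (0:V))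
        = ((f₀ a, f₀ b), 0)
      have e1 : p1 k A (jR k A b + eps k A * jR k A a) = a := by
        rw [map_add, p1_jR, p1_eps_mul, p0_jR, zero_add]
      have e0 : p0 k A (jR k A b + eps k A * jR k A a) = b := by
        rw [map_add, p0_jR, p0_eps_mul, add_zero]
      rw [e1, e0]
  obtain ⟨s, hs⟩ := hext Em inferInstance inferInstance fE gE hfE hgE hexE
  have hsv : ∀ v, (s v).val.2 = v := by
    intro v
    exact congrFun (congrArg (fun (h : V →ₗ[R k A] V) => (h : V → V)) hs) v
  refine ⟨{ toFun := fun v => (s v).val.1.1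
            map_add' := by
              intro x y
              show ((s (x + y)).val.1).1 = ((s x).val.1).1 + ((s y).val.1).1
              rw [map_add]
              rfl
            map_smul' := by
              intro a v
              show ((s (a • v)).val.1).1 = a • ((s v).val.1).1
              rw [hc, map_smul]
              show ((jR k A a • (s v)).val.1).1 = a • ((s v).val.1).1
              rw [Submodule.coe_smul, Prod.smul_fst, hsmul1]
              show p0 k A (jR k A a) • ((s v).val.1).1
                + p1 k A (jR k A a) • ((s v).val.1).2 = _
              rw [p0_jR, p1_jR, zero_smul, add_zero] }, ?_⟩
  intro v
  exact ((s v).prop.1).trans (hsv v)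

end Coind

section Backward

variable {k A}

set_option maxHeartbeats 2000000 in
set_option synthInstance.maxHeartbeats 1000000 in
/-- Given `Ext¹(V, Λ) = 0`, every `A`-linear functional on the kernel of a free
`A`-presentation of `V` extends to the free module. -/
lemma extend_functional
    {V : Type} [AddCommGroup V] [Module (R k A) V] [Module A V]
    (hc : ∀ (a : A) (v : V), a • v = jR k A a • v)
    (hext : Ext1Vanishes (R k A) V (R k A))
    {m : ℕ} (q : (Fin m → A) →ₗ[A] V) (hq : Function.Surjective q)
    (f : ↥(LinearMap.ker q) →ₗ[A] A) :
    ∃ G : (Fin m → A) →ₗ[A] A, ∀ (x : Fin m → A) (hx : x ∈ LinearMap.ker q),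
      G x = f ⟨x, hx⟩ := by
  classical
  let inc : ↥(LinearMap.ker q) →ₗ[A] (A × (Fin m → A)) :=
    LinearMap.prod f (-((LinearMap.ker q).subtype))
  set U : Submodule A (A × (Fin m → A)) := LinearMap.range inc with hU
  let mk : (A × (Fin m → A)) →ₗ[A] ((A × (Fin m → A)) ⧸ U) := U.mkQ
  let f₀ : A →ₗ[A] ((A × (Fin m → A)) ⧸ U) := mk ∘ₗ LinearMap.inl A A (Fin m → A)
  have hUker : U ≤ LinearMap.ker (q ∘ₗ LinearMap.snd A A (Fin m → A)) := by
    rintro _ ⟨kk, rfl⟩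
    show q (inc kk).2 = 0
    show q (-(kk : Fin m → A)) = 0
    rw [map_neg, neg_eq_zero]
    exact kk.prop
  let g₀ : ((A × (Fin m → A)) ⧸ U) →ₗ[A] V :=
    U.liftQ (q ∘ₗ LinearMap.snd A A (Fin m → A)) hUker
  have hg₀mk : ∀ p : A × (Fin m → A), g₀ (mk p) = q p.2 := fun _ => rfl
  have hf₀ : Function.Injective f₀ := by
    intro a b hab
    have hU' : ((a, 0) : A × (Fin m → A)) - (b, 0) ∈ U :=
      (Submodule.Quotient.eq U).mp hab
    obtain ⟨kk, hkk⟩ := hU'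
    have h2 : -(kk : Fin m → A) = 0 - 0 := congrArg Prod.snd hkk
    rw [sub_zero, neg_eq_zero] at h2
    have hkk0 : kk = 0 := Subtype.ext h2
    have h1 : f kk = a - b := congrArg Prod.fst hkk
    rw [hkk0, map_zero] at h1
    exact sub_eq_zero.mp h1.symm
  have hg₀ : Function.Surjective g₀ := by
    intro v
    obtain ⟨x, hx⟩ := hq v
    exact ⟨mk (0, x), hx ▸ hg₀mk (0, x)⟩
  have hex₀ : LinearMap.range f₀ = LinearMap.ker g₀ := by
    apply le_antisymm
    · rintro _ ⟨a, rfl⟩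
      show g₀ (mk (a, 0)) = 0
      rw [hg₀mk]
      exact map_zero q
    · intro e he
      obtain ⟨p, rfl⟩ := U.mkQ_surjective e
      have hqp : q p.2 = 0 := he
      have hxK : p.2 ∈ LinearMap.ker q := hqp
      refine ⟨p.1 + f ⟨p.2, hxK⟩, ?_⟩
      show (Submodule.Quotient.mk (p.1 + f ⟨p.2, hxK⟩, 0) : (A × (Fin m → A)) ⧸ U)
        = Submodule.Quotient.mk p
      rw [Submodule.Quotient.eq]
      exact ⟨⟨p.2, hxK⟩, by
        apply Prod.ext
        · show f ⟨p.2, hxK⟩ = p.1 + f ⟨p.2, hxK⟩ - p.1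
          rw [add_sub_cancel_left]
        · show -(p.2) = 0 - p.2
          rw [zero_sub]⟩
  obtain ⟨s₀, hs₀⟩ := split_A_ext hc hext _ f₀ g₀ hf₀ hg₀ hex₀
  let hmap : (Fin m → A) →ₗ[A] ((A × (Fin m → A)) ⧸ U) :=
    (mk ∘ₗ LinearMap.inr A A (Fin m → A)) - (s₀ ∘ₗ q)
  have hmem : ∀ x, hmap x ∈ LinearMap.range f₀ := by
    intro x
    rw [hex₀]
    show g₀ (mk (0, x) - s₀ (q x)) = 0
    rw [map_sub, hg₀mk, hs₀, sub_self]
  let e₀ := LinearEquiv.ofInjective f₀ hf₀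
  let G : (Fin m → A) →ₗ[A] A :=
    e₀.symm.toLinearMap ∘ₗ (hmap.codRestrict (LinearMap.range f₀) hmem)
  have hfG : ∀ x, f₀ (G x) = hmap x := by
    intro x
    have h1 : e₀ (G x) = ⟨hmap x, hmem x⟩ :=
      e₀.apply_symm_apply ⟨hmap x, hmem x⟩
    have h2 : (e₀ (G x) : (A × (Fin m → A)) ⧸ U) = hmap x := congrArg Subtype.val h1
    exact (LinearEquiv.ofInjective_apply f₀ (G x) (h := hf₀)).symm.trans h2
  refine ⟨G, ?_⟩
  intro x hx
  apply hf₀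
  rw [hfG]
  have hqx : q x = 0 := hx
  show mk (0, x) - s₀ (q x) = f₀ (f ⟨x, hx⟩)
  rw [hqx, map_zero, sub_zero]
  show (Submodule.Quotient.mk (0, x) : (A × (Fin m → A)) ⧸ U)
    = Submodule.Quotient.mk (f ⟨x, hx⟩, 0)
  rw [Submodule.Quotient.eq]
  exact ⟨-⟨x, hx⟩, by
    apply Prod.ext
    · show f (-⟨x, hx⟩) = 0 - f ⟨x, hx⟩
      rw [map_neg, zero_sub]
    · show -(((-⟨x, hx⟩ : ↥(LinearMap.ker q)) : Fin m → A)) = x - 0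
      rw [sub_zero]
      simp⟩

set_option maxHeartbeats 1000000 in
set_option synthInstance.maxHeartbeats 400000 in
lemma finiteA
    {V : Type} [AddCommGroup V] [Module (R k A) V] [Module A V]
    (hc : ∀ (a : A) (v : V), a • v = jR k A a • v)
    [Module.Finite (R k A) V] :
    Module.Finite A V := by
  classical
  obtain ⟨S, hS⟩ := Module.Finite.fg_top (R := R k A) (M := V)
  let T : Finset V := S ∪ S.image (fun v => eps k A • v)
  set N := Submodule.span A (T : Set V) with hN
  have hST : (S : Set V) ⊆ (T : Set V) := by
    intro v hv
    simp only [T, Finset.coe_union, Set.mem_union, Finset.mem_coe]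
    exact Or.inl hv
  have hepsA : ∀ (a : A) (v : V), eps k A • (a • v) = a • (eps k A • v) := by
    intro a v
    rw [hc, hc, ← mul_smul, ← mul_smul, eps_comm]
  have hEN : ∀ v ∈ N, eps k A • v ∈ N := by
    intro v hv
    induction hv using Submodule.span_induction with
    | mem x hx =>
        simp only [T, Finset.coe_union, Set.mem_union, Finset.mem_coe,
          Finset.mem_image] at hx
        rcases hx with hx | ⟨u, hu, rfl⟩
        · apply Submodule.subset_span
          simp only [T, Finset.coe_union, Set.mem_union, Finset.mem_coe,
            Finset.mem_image]
          exact Or.inr ⟨x, hx, rfl⟩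
        · rw [← mul_smul, eps_mul_eps]; rw [show (0 : R k A) • u = 0 from zero_smul (R k A) u]
          exact Submodule.zero_mem N
    | zero => rw [smul_zero]; exact Submodule.zero_mem N
    | add x y _ _ hx hy => rw [smul_add]; exact Submodule.add_mem N hx hy
    | smul a x _ hx => rw [hepsA]; exact Submodule.smul_mem N a hx
  have hdec : ∀ (r : R k A) (v : V),
      r • v = p0 k A r • v + p1 k A r • (eps k A • v) := by
    intro r v
    rw [smul_decomp k A r v, hc, hc]
    congr 1
    rw [← mul_smul, eps_comm, mul_smul]
  have hsub : ∀ v ∈ Submodule.span (R k A) (S : Set V), v ∈ N := by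
    intro v hv
    induction hv using Submodule.span_induction with
    | mem x hx => exact Submodule.subset_span (hST hx)
    | zero => exact Submodule.zero_mem N
    | add x y _ _ hx hy => exact Submodule.add_mem N hx hy
    | smul r x _ hx =>
        rw [hdec]
        exact Submodule.add_mem N (Submodule.smul_mem N _ hx)
          (Submodule.smul_mem N _ (hEN x hx))
  refine ⟨⟨T, ?_⟩⟩
  rw [eq_top_iff]
  intro v _
  exact hsub v (hS ▸ Submodule.mem_top)

set_option maxHeartbeats 2000000 in
set_option synthInstance.maxHeartbeats 1000000 in
lemma backward [FiniteDimensional k A]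
    (hHer : ∀ (P : Type) (_ : AddCommGroup P) (_ : Module A P),
      Module.Projective A P → ∀ N : Submodule A P, Module.Projective A N)
    {V : Type} [AddCommGroup V] [Module (R k A) V] [Module.Finite (R k A) V]
    (hext : Ext1Vanishes (R k A) V (R k A)) :
    ∃ (P : Type) (_ : AddCommGroup P) (_ : Module (R k A) P),
        Module.Finite (R k A) P ∧ Module.Projective (R k A) P ∧
        ∃ ι : V →ₗ[R k A] P, Function.Injective ι := by
  classical
  letI mAV : Module A V := Module.compHom V (jR k A)
  have hc : ∀ (a : A) (v : V), a • v = jR k A a • v := fun _ _ => rfl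
  letI : Module.Finite A V := finiteA hc
  obtain ⟨m, q, hq⟩ := Module.Finite.exists_fin' A V
  set K := LinearMap.ker q with hKdef
  -- K is finitely generated and projective
  haveI : IsNoetherian k A := isNoetherian_of_isNoetherianRing_of_finite k A
  haveI : IsNoetherianRing A := isNoetherian_of_tower k inferInstance
  haveI : Module.Finite A ↥K := Module.Finite.iff_fg.mpr (IsNoetherian.noetherian K)
  haveI : Module.Projective A ↥K :=
    hHer (Fin m → A) inferInstance inferInstance inferInstance K
  obtain ⟨l, q', hq'⟩ := Module.Finite.exists_fin' A ↥K
  obtain ⟨σ', hσ'⟩ := Module.projective_lifting_property q' LinearMap.id hq'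
  have hσ'id : ∀ x : ↥K, q' (σ' x) = x := by
    intro x
    exact congrFun (congrArg (fun (h : ↥K →ₗ[A] ↥K) => (h : ↥K → ↥K)) hσ') x
  -- extend each coordinate of σ'
  have hGi : ∀ i : Fin l, ∃ G : (Fin m → A) →ₗ[A] A,
      ∀ (x : Fin m → A) (hx : x ∈ K), G x = σ' ⟨x, hx⟩ i := by
    intro i
    exact extend_functional hc hext q hq ((LinearMap.proj i) ∘ₗ σ')
  choose G hG using hGi
  let Gmap : (Fin m → A) →ₗ[A] (Fin l → A) := LinearMap.pi G
  let π : (Fin m → A) →ₗ[A] ↥K := q' ∘ₗ Gmap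
  have hπ : ∀ (x : Fin m → A) (hx : x ∈ K), π x = ⟨x, hx⟩ := by
    intro x hx
    have hGx : Gmap x = σ' ⟨x, hx⟩ := by
      funext i
      exact hG i x hx
    show q' (Gmap x) = _
    rw [hGx, hσ'id]
  -- the corrected projection gives a section of q
  let Θ : (Fin m → A) →ₗ[A] (Fin m → A) := LinearMap.id - (K.subtype ∘ₗ π)
  have hΘK : ∀ x ∈ K, Θ x = 0 := by
    intro x hx
    show x - ((π x : ↥K) : Fin m → A) = 0
    rw [hπ x hx, sub_self]
  have hqΘ : ∀ x, q (Θ x) = q x := by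
    intro x
    show q (x - ((π x : ↥K) : Fin m → A)) = q x
    rw [map_sub, (π x).prop, sub_zero]
  have hwd : ∀ x y, q x = q y → Θ x = Θ y := by
    intro x y hxy
    have : x - y ∈ K := by
      show q (x - y) = 0
      rw [map_sub, hxy, sub_self]
    have h0 := hΘK (x - y) this
    rw [map_sub, sub_eq_zero] at h0
    exact h0
  let sfun : V → (Fin m → A) := fun v => Θ (hq v).choose
  have hqs : ∀ v, q (sfun v) = v := by
    intro v
    rw [hqΘ]
    exact (hq v).choose_spec
  have hsfun : ∀ x, sfun (q x) = Θ x := fun x => hwd _ _ ((hq (q x)).choose_spec)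
  let s : V →ₗ[A] (Fin m → A) :=
    { toFun := sfun
      map_add' := by
        intro x y
        obtain ⟨a, rfl⟩ := hq x
        obtain ⟨b, rfl⟩ := hq y
        rw [← map_add, hsfun, hsfun, hsfun, map_add]
      map_smul' := by
        intro a v
        obtain ⟨b, rfl⟩ := hq v
        show sfun (a • q b) = a • sfun (q b)
        rw [← map_smul, hsfun, hsfun, map_smul] }
  have hsA : ∀ (a : A) (v : V), s (a • v) = a • s v := map_smul s
  -- the Λ-linear embedding into (Fin m → Λ)
  let Φadd : V →+ (Fin m → R k A) :=
    { toFun := fun v i => jR k A (s (eps k A • v) i) + eps k A * jR k A (s v i)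
      map_zero' := by
        funext i
        show jR k A (s (eps k A • (0:V)) i) + eps k A * jR k A (s (0:V) i) = 0
        rw [smul_zero, map_zero]
        show jR k A ((0 : Fin m → A) i) + eps k A * jR k A ((0 : Fin m → A) i) = 0
        rw [Pi.zero_apply, map_zero, mul_zero, add_zero]
      map_add' := by
        intro x y
        funext i
        show jR k A (s (eps k A • (x + y)) i) + eps k A * jR k A (s (x + y) i) = _
        rw [smul_add, map_add, map_add]
        show jR k A ((s (eps k A • x) + s (eps k A • y)) i)
          + eps k A * jR k A ((s x + s y) i) = _
        rw [Pi.add_apply, Pi.add_apply, map_add, map_add, mul_add]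
        show _ = (jR k A (s (eps k A • x) i) + eps k A * jR k A (s x i))
          + (jR k A (s (eps k A • y) i) + eps k A * jR k A (s y i))
        abel }
  have hΦA : ∀ (a : A) (v : V),
      Φadd (jR k A a • v) = jR k A a • Φadd v := by
    intro a v
    funext i
    show jR k A (s (eps k A • (jR k A a • v)) i) + eps k A * jR k A (s (jR k A a • v) i)
      = jR k A a * (jR k A (s (eps k A • v) i) + eps k A * jR k A (s v i))
    have h1 : eps k A • (jR k A a • v) = jR k A a • (eps k A • v) := by
      rw [← mul_smul, ← mul_smul, eps_comm]
    rw [h1, ← hc, hsA, ← hc a v, hsA]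
    show jR k A ((a • s (eps k A • v)) i) + eps k A * jR k A ((a • s v) i) = _
    have ha : ∀ (w : Fin m → A) (i : Fin m), (a • w) i = a * w i := fun _ _ => rfl
    rw [ha, ha, map_mul, map_mul, mul_add]
    congr 1
    rw [← mul_assoc, eps_comm k A (jR k A a), mul_assoc]
  have hΦE : ∀ v, Φadd (eps k A • v) = eps k A • Φadd v := by
    intro v
    funext i
    show jR k A (s (eps k A • (eps k A • v)) i) + eps k A * jR k A (s (eps k A • v) i)
      = eps k A * (jR k A (s (eps k A • v) i) + eps k A * jR k A (s v i))
    have h0 : eps k A • (eps k A • v) = (0 : V) := by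
      rw [← mul_smul, eps_mul_eps]; exact zero_smul (R k A) v
    rw [h0, map_zero, mul_add, ← mul_assoc, eps_mul_eps, zero_mul, add_zero]
    show (0 : Fin m → A) i ⊗ₜ[k] (1 : DualNumber k) + eps k A * jR k A (s (eps k A • v) i)
      = eps k A * jR k A (s (eps k A • v) i)
    simp
  let Φ : V →ₗ[R k A] (Fin m → R k A) := mkRLinear k A Φadd hΦA hΦE
  have hΦinj : Function.Injective Φ := by
    intro x y hxy
    have hcomp : ∀ v i, p1 k A (Φ v i) = s v i := by
      intro v i
      show p1 k A (jR k A (s (eps k A • v) i) + eps k A * jR k A (s v i)) = s v i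
      rw [map_add, p1_jR, p1_eps_mul, p0_jR, zero_add]
    have hsv : s x = s y := by
      funext i
      rw [← hcomp x i, ← hcomp y i]
      show p1 k A ((Φ x) i) = p1 k A ((Φ y) i)
      rw [hxy]
    have := congrArg q hsv
    rwa [show q (s x) = x from hqs x, show q (s y) = y from hqs y] at this
  exact ⟨Fin m → R k A, inferInstance, inferInstance, inferInstance, inferInstance,
    Φ, hΦinj⟩

end Backward

end Stmt11

/-- Let `A` be a finite dimensional hereditary `k`-algebra (such as the path
algebra `kQ` of a finite connected acyclic quiver) and `Λ = A ⊗_k k[ε]` with `k[ε]` the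
dual numbers.  A finitely generated left `Λ`-module `V` is torsionless (embeds into a
finitely generated projective `Λ`-module) if and only if `Ext¹_Λ(V, Λ) = 0`. -/
theorem stmt_11 (k : Type) [Field k] (A : Type) [Ring A] [Algebra k A]
    [FiniteDimensional k A]
    (hHer : ∀ (P : Type) (_ : AddCommGroup P) (_ : Module A P),
      Module.Projective A P → ∀ N : Submodule A P, Module.Projective A N)
    (V : Type) [AddCommGroup V] [Module (TensorProduct k A (DualNumber k)) V]
    [Module.Finite (TensorProduct k A (DualNumber k)) V] :
    (∃ (P : Type) (_ : AddCommGroup P) (_ : Module (TensorProduct k A (DualNumber k)) P),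
        Module.Finite (TensorProduct k A (DualNumber k)) P ∧
        Module.Projective (TensorProduct k A (DualNumber k)) P ∧
        ∃ ι : LinearMap (R := TensorProduct k A (DualNumber k))
          (S := TensorProduct k A (DualNumber k))
          (RingHom.id (TensorProduct k A (DualNumber k))) V P, Function.Injective ι) ↔
    Ext1Vanishes (TensorProduct k A (DualNumber k)) V
      (TensorProduct k A (DualNumber k)) := by
  constructor
  · intro h
    exact Stmt11.forward hHer h
  · intro h
    exact Stmt11.backward hHer h
end
end

section
/- Let A be a finite dimensional hereditary k-algebra and Λ = A ⊗_k k[ε]. If V is a torsionless finitely generated left Λ-module, then V is strongly Gorenstein-projective: there exists a short exact sequence 0 → V → P → V → 0 with P projective, and Ext^1_Λ(V, P') = 0 for all projective left Λ-modules P'. -/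
/-- `V` is strongly Gorenstein-projective: there is a short exact sequence
`0 → V → P → V → 0` with `P` projective and `Ext¹_Λ(V, P') = 0` for every
projective module `P'`. -/
def IsStronglyGorensteinProjective (Λ : Type) [Ring Λ] (V : Type) [AddCommGroup V]
    [Module Λ V] : Prop :=
  (∃ (P : Type) (_ : AddCommGroup P) (_ : Module Λ P) (_ : Module.Projective Λ P)
    (ι : V →ₗ[Λ] P) (π : P →ₗ[Λ] V),
      Function.Injective ι ∧ Function.Surjective π ∧
      LinearMap.range ι = LinearMap.ker π) ∧
  ∀ (P' : Type) (_ : AddCommGroup P') (_ : Module Λ P'),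
    Module.Projective Λ P' → Ext1Vanishes Λ V P'

noncomputable section SGPaux

variable {A R : Type} [Ring A] [Ring R]

/-- Data exhibiting `R` as a "dual number extension" of `A`. -/
structure GoodExt (A R : Type) [Ring A] [Ring R] where
  ρ : A →+* R
  e : R
  pA : R →+ A
  qA : R →+ A
  hc : ∀ r : R, e * r = r * e
  axp1 : ∀ (a : A) (r : R), pA (ρ a * r) = a * pA r
  axq1 : ∀ (a : A) (r : R), qA (ρ a * r) = a * qA r
  axp2 : ∀ r : R, pA (e * r) = 0
  axq2 : ∀ r : R, qA (e * r) = pA r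
  axd : ∀ r : R, r = ρ (pA r) + e * ρ (qA r)
  axp3 : pA 1 = 1
  axq3 : qA 1 = 0

namespace GoodExt

variable (G : GoodExt A R)

theorem pρ (a : A) : G.pA (G.ρ a) = a := by
  simpa [G.axp3] using G.axp1 a 1

theorem qρ (a : A) : G.qA (G.ρ a) = 0 := by
  simpa [G.axq3] using G.axq1 a 1

theorem pe : G.pA G.e = 0 := by simpa using G.axp2 1

theorem qe : G.qA G.e = 1 := by simpa [G.axp3] using G.axq2 1

theorem he2 : G.e * G.e = 0 := by
  have h := G.axd (G.e * G.e)
  rw [G.axp2, show G.qA (G.e * G.e) = 0 by simpa [G.pe] using G.axq2 G.e] at h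
  simpa using h

theorem pmul (r s : R) : G.pA (r * s) = G.pA r * G.pA s := by
  conv_lhs => rw [G.axd r]
  rw [add_mul, map_add, mul_assoc, G.axp1, G.axp2, add_zero]

theorem qmul (r s : R) : G.qA (r * s) = G.pA r * G.qA s + G.qA r * G.pA s := by
  conv_lhs => rw [G.axd r]
  rw [add_mul, map_add, mul_assoc, G.axq1, G.axq2, G.axp1]

theorem esmul_comm {X : Type} [AddCommGroup X] [Module R X] (r : R) (x : X) :
    G.e • r • x = r • G.e • x := by
  rw [← mul_smul, G.hc, mul_smul]

/-- The `A`-module structure on an `R`-module obtained from `ρ`. -/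
def amod (X : Type) [AddCommGroup X] [Module R X] : Module A X :=
  letI : SMul A X := ⟨fun a x => G.ρ a • x⟩
  Module.ofMinimalAxioms
    (fun a x y => smul_add (G.ρ a) x y)
    (fun a b x => show G.ρ (a + b) • x = _ by rw [map_add, add_smul]; rfl)
    (fun a b x => show G.ρ (a * b) • x = _ by rw [map_mul, mul_smul]; rfl)
    (fun x => show G.ρ 1 • x = x by rw [map_one, one_smul])

/-- Projectivity over `A` (with the `amod` structure) of an `R`-module. -/
def AProj (X : Type) [AddCommGroup X] [Module R X] : Prop :=
  @Module.Projective A _ X _ (G.amod X)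

/-- Build an `R`-linear map from an additive map commuting with `ρ`- and `e`-actions. -/
def mkLinear {X Y : Type} [AddCommGroup X] [Module R X] [AddCommGroup Y] [Module R Y]
    (f : X →+ Y) (h1 : ∀ (a : A) (x : X), f (G.ρ a • x) = G.ρ a • f x)
    (h2 : ∀ x : X, f (G.e • x) = G.e • f x) : X →ₗ[R] Y where
  toFun := f
  map_add' := f.map_add
  map_smul' := by
    intro r x
    simp only [RingHom.id_apply]
    conv_lhs => rw [G.axd r]
    rw [add_smul, map_add, h1, mul_smul, h2, h1, ← mul_smul, ← add_smul, ← G.axd r]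

@[simp] theorem mkLinear_apply {X Y : Type} [AddCommGroup X] [Module R X] [AddCommGroup Y]
    [Module R Y] (f : X →+ Y) (h1) (h2) (x : X) : G.mkLinear f h1 h2 x = f x := rfl


end GoodExt

/-- Carrier for the projective cover construction: a copy of `V × V`. -/
def Pc (V : Type) : Type := V × V

instance (V : Type) [AddCommGroup V] : AddCommGroup (Pc V) :=
  inferInstanceAs (AddCommGroup (V × V))

namespace GoodExt

variable (G : GoodExt A R)

variable (V : Type) [AddCommGroup V] [Module R V]

/-- The scalar action of `R` on `Pc V`. -/
def pcSMul : SMul R (Pc V) :=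
  ⟨fun r x => (G.ρ (G.pA r) • x.1, G.ρ (G.pA r) • x.2 + G.ρ (G.qA r) • x.1)⟩

/-- The `R`-module structure on `Pc V` modelling `R ⊗_A V`. -/
def pcModule : Module R (Pc V) :=
  letI : SMul R (Pc V) := G.pcSMul V
  Module.ofMinimalAxioms
    (fun r x y =>
      show ((G.ρ (G.pA r) • (x.1 + y.1), G.ρ (G.pA r) • (x.2 + y.2)
              + G.ρ (G.qA r) • (x.1 + y.1)) : V × V)
          = (G.ρ (G.pA r) • x.1 + G.ρ (G.pA r) • y.1,
             (G.ρ (G.pA r) • x.2 + G.ρ (G.qA r) • x.1)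
              + (G.ρ (G.pA r) • y.2 + G.ρ (G.qA r) • y.1)) from
      congrArg₂ Prod.mk (by rw [smul_add]) (by rw [smul_add, smul_add]; abel))
    (fun r s x =>
      show ((G.ρ (G.pA (r + s)) • x.1, G.ρ (G.pA (r + s)) • x.2
              + G.ρ (G.qA (r + s)) • x.1) : V × V)
          = (G.ρ (G.pA r) • x.1 + G.ρ (G.pA s) • x.1,
             (G.ρ (G.pA r) • x.2 + G.ρ (G.qA r) • x.1)
              + (G.ρ (G.pA s) • x.2 + G.ρ (G.qA s) • x.1)) from
      congrArg₂ Prod.mk (by rw [map_add, map_add, add_smul])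
        (by rw [map_add, map_add, map_add, map_add, add_smul, add_smul]; abel))
    (fun r s x =>
      show ((G.ρ (G.pA (r * s)) • x.1, G.ρ (G.pA (r * s)) • x.2
              + G.ρ (G.qA (r * s)) • x.1) : V × V)
          = (G.ρ (G.pA r) • G.ρ (G.pA s) • x.1,
             G.ρ (G.pA r) • (G.ρ (G.pA s) • x.2 + G.ρ (G.qA s) • x.1)
              + G.ρ (G.qA r) • G.ρ (G.pA s) • x.1) from
      congrArg₂ Prod.mk (by rw [G.pmul, map_mul, mul_smul])
        (by rw [G.pmul, G.qmul, map_add, map_mul, map_mul, map_mul, add_smul, mul_smul,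
              mul_smul, mul_smul, smul_add]
            abel))
    (fun x =>
      show ((G.ρ (G.pA 1) • x.1, G.ρ (G.pA 1) • x.2 + G.ρ (G.qA 1) • x.1) : V × V)
          = (x.1, x.2) from
      congrArg₂ Prod.mk (by rw [G.axp3, map_one, one_smul])
        (by rw [G.axp3, G.axq3, map_one, map_zero, one_smul, zero_smul, add_zero]))

theorem part1 (hV : G.AProj V) (σ : V → V)
    (hσadd : ∀ x y, σ (x + y) = σ x + σ y)
    (hσρ : ∀ (a : A) (x : V), σ (G.ρ a • x) = G.ρ a • σ x)
    (hσe : ∀ x, σ (G.e • x) = -(G.e • σ x))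
    (hσσ : ∀ x, σ (σ x) = x) :
    ∃ (P : Type) (_ : AddCommGroup P) (_ : Module R P) (_ : Module.Projective R P)
      (ι : V →ₗ[R] P) (π : P →ₗ[R] V),
      Function.Injective ι ∧ Function.Surjective π ∧ LinearMap.range ι = LinearMap.ker π := by
  classical
  letI mP := G.pcModule V
  have hs : ∀ (r : R) (z : Pc V),
      r • z = (G.ρ (G.pA r) • z.1, G.ρ (G.pA r) • z.2 + G.ρ (G.qA r) • z.1) := fun _ _ => rfl
  have hadd : ∀ z w : Pc V, z + w = ((z.1 + w.1 : V), (z.2 + w.2 : V)) := fun _ _ => rfl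
  have heta : ∀ z : Pc V, z = ((z.1 : V), (z.2 : V)) := fun _ => rfl
  have hsρ : ∀ (a : A) (z : Pc V), G.ρ a • z = ((G.ρ a • z.1 : V), (G.ρ a • z.2 : V)) := by
    intro a z; rw [hs, G.pρ, G.qρ, map_zero, zero_smul, add_zero]
  have hse : ∀ z : Pc V, G.e • z = ((0 : V), (z.1 : V)) := by
    intro z
    rw [hs, G.pe, G.qe, map_zero, map_one, zero_smul, zero_smul, one_smul, zero_add]
  have hσ0 : σ 0 = 0 := by
    have := hσadd 0 0; rw [add_zero] at this
    exact right_eq_add.mp this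
  -- the embedding ι
  let ι : V →ₗ[R] Pc V := G.mkLinear
    (AddMonoidHom.mk' (fun m => ((G.e • m, m) : Pc V)) (fun x y => by
      refine Eq.trans ?_ (hadd _ _).symm
      exact congrArg₂ Prod.mk (smul_add _ _ _) rfl))
    (fun a m => by
      rw [hsρ]
      exact congrArg₂ Prod.mk (G.esmul_comm _ _) rfl)
    (fun m => by
      rw [hse]
      exact congrArg₂ Prod.mk (by rw [← mul_smul, G.he2, zero_smul]) rfl)
  have hι : ∀ m : V, ι m = ((G.e • m, m) : Pc V) := fun _ => rfl
  -- the projection π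
  let π : Pc V →ₗ[R] V := G.mkLinear
    (AddMonoidHom.mk' (fun z : Pc V => σ z.1 + G.e • σ z.2) (fun z w => by
      rw [hadd]
      show σ (z.1 + w.1) + G.e • σ (z.2 + w.2) = _
      rw [hσadd, hσadd, smul_add]
      abel))
    (fun a z => by
      rw [hsρ]
      show σ (G.ρ a • z.1) + G.e • σ (G.ρ a • z.2) = G.ρ a • (σ z.1 + G.e • σ z.2)
      rw [hσρ, hσρ, smul_add, G.esmul_comm])
    (fun z => by
      rw [hse]
      show σ 0 + G.e • σ z.1 = G.e • (σ z.1 + G.e • σ z.2)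
      rw [hσ0, zero_add, smul_add, ← mul_smul, G.he2, zero_smul, add_zero])
  have hπ : ∀ z : Pc V, π z = σ z.1 + G.e • σ z.2 := fun _ => rfl
  -- projectivity of Pc V
  letI aV := G.amod V
  haveI hVP : Module.Projective A V := hV
  obtain ⟨sA, hsA⟩ := Module.projective_def.mp hVP
  set u₁ : (V →₀ A) → (V →₀ R) := fun c => c.mapRange G.ρ (map_zero _) with hu₁def
  set u₂ : (V →₀ A) → (V →₀ R) := fun c => c.mapRange (fun a => G.e * G.ρ a)
    (by simp) with hu₂def
  have hu₁add : ∀ c d, u₁ (c + d) = u₁ c + u₁ d := fun c d =>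
    Finsupp.mapRange_add (fun a b => map_add G.ρ a b) c d
  have hu₂add : ∀ c d, u₂ (c + d) = u₂ c + u₂ d := fun c d =>
    Finsupp.mapRange_add (fun a b => by rw [map_add, mul_add]) c d
  have hsAs : ∀ (a : A) (m : V), sA (G.ρ a • m) = a • sA m := fun a m => sA.map_smul a m
  have hu₁s : ∀ (a : A) (c : V →₀ A), u₁ (a • c) = G.ρ a • u₁ c := by
    intro a c; ext v
    simp only [hu₁def, Finsupp.mapRange_apply, Finsupp.smul_apply, smul_eq_mul, map_mul]
  have hu₂s : ∀ (a : A) (c : V →₀ A), u₂ (a • c) = G.ρ a • u₂ c := by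
    intro a c; ext v
    simp only [hu₂def, Finsupp.mapRange_apply, Finsupp.smul_apply, smul_eq_mul, map_mul]
    rw [← mul_assoc, G.hc, mul_assoc]
  have he₁ : ∀ c : V →₀ A, G.e • u₁ c = u₂ c := by
    intro c; ext v
    simp only [hu₁def, hu₂def, Finsupp.mapRange_apply, Finsupp.smul_apply, smul_eq_mul]
  have he₂ : ∀ c : V →₀ A, G.e • u₂ c = 0 := by
    intro c; ext v
    simp only [hu₂def, Finsupp.mapRange_apply, Finsupp.smul_apply, smul_eq_mul,
      Finsupp.coe_zero, Pi.zero_apply]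
    rw [← mul_assoc, G.he2, zero_mul]
  let S : Pc V →ₗ[R] (V →₀ R) := G.mkLinear
    (AddMonoidHom.mk' (fun z : Pc V => u₁ (sA z.1) + u₂ (sA z.2)) (fun z w => by
      rw [hadd]
      show u₁ (sA (z.1 + w.1)) + u₂ (sA (z.2 + w.2))
        = (u₁ (sA z.1) + u₂ (sA z.2)) + (u₁ (sA w.1) + u₂ (sA w.2))
      rw [map_add, map_add, hu₁add, hu₂add]
      abel))
    (fun a z => by
      rw [hsρ]
      show u₁ (sA (G.ρ a • z.1)) + u₂ (sA (G.ρ a • z.2))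
        = G.ρ a • (u₁ (sA z.1) + u₂ (sA z.2))
      rw [hsAs, hsAs, hu₁s, hu₂s, smul_add])
    (fun z => by
      rw [hse]
      show u₁ (sA 0) + u₂ (sA z.1) = G.e • (u₁ (sA z.1) + u₂ (sA z.2))
      rw [map_zero, smul_add, he₁, he₂, add_zero,
        show u₁ (0 : V →₀ A) = 0 from Finsupp.mapRange_zero, zero_add])
  let T : (V →₀ R) →ₗ[R] Pc V := Finsupp.linearCombination R (fun v => ((v, 0) : Pc V))
  have hT1 : ∀ c : V →₀ A, T (u₁ c) = ((Finsupp.linearCombination A id c : V), (0 : V)) := by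
    intro c
    induction c using Finsupp.induction_linear with
    | zero => rw [show u₁ 0 = 0 from Finsupp.mapRange_zero, map_zero, map_zero]; rfl
    | add f g hf hg =>
        rw [hu₁add, map_add, map_add, hf, hg]; refine (hadd _ _).trans ?_
        exact congrArg₂ Prod.mk rfl (by rw [add_zero])
    | single v a =>
        rw [show u₁ (Finsupp.single v a) = Finsupp.single v (G.ρ a) from
          Finsupp.mapRange_single, Finsupp.linearCombination_single]
        refine Eq.trans (Finsupp.linearCombination_single ..) ?_
        refine Eq.trans (hsρ _ _) ?_
        exact congrArg₂ Prod.mk rfl (smul_zero _)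
  have hT2 : ∀ c : V →₀ A, T (u₂ c) = ((0 : V), (Finsupp.linearCombination A id c : V)) := by
    intro c
    induction c using Finsupp.induction_linear with
    | zero => rw [show u₂ 0 = 0 from Finsupp.mapRange_zero, map_zero, map_zero]; rfl
    | add f g hf hg =>
        rw [hu₂add, map_add, map_add, hf, hg]; refine (hadd _ _).trans ?_
        exact congrArg₂ Prod.mk (by rw [add_zero]) rfl
    | single v a =>
        rw [show u₂ (Finsupp.single v a) = Finsupp.single v (G.e * G.ρ a) from
          Finsupp.mapRange_single, Finsupp.linearCombination_single]
        refine Eq.trans (Finsupp.linearCombination_single ..) ?_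
        refine Eq.trans (hs _ _) ?_
        refine congrArg₂ Prod.mk ?_ ?_
        · rw [G.axp2, map_zero, zero_smul]
        · rw [G.axp2, G.axq2, G.pρ, map_zero, zero_smul, zero_add]; rfl
  have hTS : T.comp S = LinearMap.id := by
    apply LinearMap.ext
    intro z
    show T (u₁ (sA z.1) + u₂ (sA z.2)) = z
    rw [map_add, hT1, hT2]; refine (hadd _ _).trans ?_
    conv_rhs => rw [heta z]
    exact congrArg₂ Prod.mk (by rw [add_zero, hsA z.1]) (by rw [zero_add, hsA z.2])
  haveI hPproj : Module.Projective R (Pc V) := Module.Projective.of_split S T hTS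
  refine ⟨Pc V, inferInstance, mP, hPproj, ι, π, ?_, ?_, ?_⟩
  · intro x y hxy
    exact congrArg Prod.snd hxy
  · intro m
    refine ⟨((σ m, 0) : Pc V), ?_⟩
    show σ (σ m) + G.e • σ 0 = m
    rw [hσσ, hσ0, smul_zero, add_zero]
  · ext z
    simp only [LinearMap.mem_range, LinearMap.mem_ker]
    constructor
    · rintro ⟨m, rfl⟩
      show π (ι m) = 0
      rw [hι]
      show σ (G.e • m) + G.e • σ m = 0
      rw [hσe, neg_add_cancel]
    · intro hz
      refine ⟨z.2, ?_⟩
      have h1 : σ z.1 + G.e • σ z.2 = 0 := hz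
      have h2 : z.1 = G.e • z.2 := by
        have h3 := congrArg σ h1
        rw [hσadd, hσσ, hσe, hσσ, hσ0, add_neg_eq_zero] at h3
        exact h3
      rw [hι]
      conv_rhs => rw [heta z]
      exact congrArg₂ Prod.mk h2.symm rfl

theorem part2 (hV : G.AProj V) (W : Type) [AddCommGroup W] [Module R W]
    (hW : Module.Projective R W)
    (E : Type) (iE : AddCommGroup E) (mE : Module R E)
    (f : W →ₗ[R] E) (g : E →ₗ[R] V)
    (hf : Function.Injective f) (hg : Function.Surjective g)
    (hfg : LinearMap.range f = LinearMap.ker g) :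
    ∃ s : V →ₗ[R] E, g.comp s = LinearMap.id := by
  classical
  letI aV := G.amod V
  letI aE := G.amod E
  haveI hVP : Module.Projective A V := hV
  let gA : E →ₗ[A] V :=
    { toFun := g, map_add' := g.map_add, map_smul' := fun a x => g.map_smul (G.ρ a) x }
  obtain ⟨s₀, hs₀⟩ := Module.projective_lifting_property gA LinearMap.id (fun y => hg y)
  have hgs : ∀ m, g (s₀ m) = m := fun m => LinearMap.congr_fun hs₀ m
  have hs₀add : ∀ x y, s₀ (x + y) = s₀ x + s₀ y := fun x y => map_add s₀ x y
  have hs₀ρ : ∀ (a : A) (m : V), s₀ (G.ρ a • m) = G.ρ a • s₀ m := fun a m => s₀.map_smul a m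
  set t : V → E := fun m => s₀ (G.e • m) - G.e • s₀ m with ht
  have htmem : ∀ m, t m ∈ LinearMap.range f := by
    intro m
    rw [hfg, LinearMap.mem_ker, ht]
    show g (s₀ (G.e • m) - G.e • s₀ m) = 0
    rw [map_sub, hgs, map_smul, hgs, sub_self]
  choose t' ht' using fun m => LinearMap.mem_range.mp (htmem m)
  have ht'add : ∀ x y, t' (x + y) = t' x + t' y := by
    intro x y; apply hf
    rw [map_add, ht', ht', ht', ht]
    show s₀ (G.e • (x + y)) - G.e • s₀ (x + y)
      = (s₀ (G.e • x) - G.e • s₀ x) + (s₀ (G.e • y) - G.e • s₀ y)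
    rw [smul_add, hs₀add, hs₀add, smul_add]; abel
  have ht'ρ : ∀ (a : A) (m : V), t' (G.ρ a • m) = G.ρ a • t' m := by
    intro a m; apply hf
    rw [ht', map_smul, ht', ht]
    show s₀ (G.e • G.ρ a • m) - G.e • s₀ (G.ρ a • m)
      = G.ρ a • (s₀ (G.e • m) - G.e • s₀ m)
    rw [G.esmul_comm, hs₀ρ, hs₀ρ, smul_sub, G.esmul_comm]
  have hct : ∀ m, G.e • t' m + t' (G.e • m) = 0 := by
    intro m; apply hf
    rw [map_add, map_zero, map_smul, ht', ht', ht]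
    show G.e • (s₀ (G.e • m) - G.e • s₀ m) + (s₀ (G.e • G.e • m) - G.e • s₀ (G.e • m)) = 0
    rw [smul_sub, ← mul_smul G.e G.e (s₀ m), G.he2, zero_smul,
      ← mul_smul G.e G.e m, G.he2, zero_smul, map_zero]
    abel
  obtain ⟨uW, huW⟩ := Module.projective_def.mp hW
  set QF : (W →₀ R) → (W →₀ R) := fun c => c.mapRange (fun r => G.ρ (G.qA r)) (by simp)
    with hQF
  have hQFadd : ∀ c d, QF (c + d) = QF c + QF d := fun c d =>
    Finsupp.mapRange_add (by intro a b; rw [map_add, map_add]) c d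
  have hQFneg : ∀ c, QF (-c) = -QF c := by
    intro c; ext w
    simp only [hQF, Finsupp.mapRange_apply, Finsupp.neg_apply, map_neg]
  have hQFρ : ∀ (a : A) (c : W →₀ R), QF (G.ρ a • c) = G.ρ a • QF c := by
    intro a c; ext w
    simp only [hQF, Finsupp.mapRange_apply, Finsupp.smul_apply, smul_eq_mul, G.axq1, map_mul]
  have hkey : ∀ c : W →₀ R, G.e • QF c + QF (G.e • c) = c := by
    intro c; ext w
    simp only [hQF, Finsupp.mapRange_apply, Finsupp.add_apply, Finsupp.smul_apply, smul_eq_mul]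
    rw [G.axq2, add_comm]
    exact (G.axd (c w)).symm
  set H : V → (W →₀ R) := fun m => QF (uW (t' m)) with hH
  set h : V → W := fun m => Finsupp.linearCombination R id (H m) with hh
  have hhe : ∀ m, G.e • h m - h (G.e • m) = t' m := by
    intro m
    have h1 : t' (G.e • m) = -(G.e • t' m) := eq_neg_of_add_eq_zero_right (hct m)
    have h2 : H (G.e • m) = -QF (G.e • uW (t' m)) := by
      rw [hH]
      show QF (uW (t' (G.e • m))) = _
      rw [h1, map_neg, hQFneg, map_smul]
    have h3 : G.e • H m - H (G.e • m) = uW (t' m) := by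
      rw [h2, sub_neg_eq_add, hH]
      exact hkey (uW (t' m))
    calc G.e • h m - h (G.e • m)
        = Finsupp.linearCombination R id (G.e • H m - H (G.e • m)) := by
          rw [map_sub, map_smul]
      _ = t' m := by rw [h3, huW (t' m)]
  have hhadd : ∀ x y, h (x + y) = h x + h y := by
    intro x y
    rw [hh]
    show Finsupp.linearCombination R id (H (x + y)) = _
    rw [hH]
    show Finsupp.linearCombination R id (QF (uW (t' (x + y)))) = _
    rw [ht'add, map_add, hQFadd, map_add]
  have hhρ : ∀ (a : A) (m : V), h (G.ρ a • m) = G.ρ a • h m := by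
    intro a m
    rw [hh]
    show Finsupp.linearCombination R id (QF (uW (t' (G.ρ a • m)))) = _
    rw [ht'ρ, map_smul, hQFρ, map_smul]
  let s : V →ₗ[R] E := G.mkLinear
    (AddMonoidHom.mk' (fun m => s₀ m + f (h m)) (by
      intro x y
      show s₀ (x + y) + f (h (x + y)) = (s₀ x + f (h x)) + (s₀ y + f (h y))
      rw [hhadd, hs₀add, map_add]
      abel))
    (fun a m => by
      show s₀ (G.ρ a • m) + f (h (G.ρ a • m)) = G.ρ a • (s₀ m + f (h m))
      rw [hs₀ρ, hhρ, map_smul, smul_add])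
    (fun m => by
      show s₀ (G.e • m) + f (h (G.e • m)) = G.e • (s₀ m + f (h m))
      have h2 : h (G.e • m) = G.e • h m - t' m := by
        rw [← hhe m]; abel
      rw [h2, map_sub f, map_smul f, ht', ht]
      show s₀ (G.e • m) + (G.e • f (h m) - (s₀ (G.e • m) - G.e • s₀ m))
        = G.e • (s₀ m + f (h m))
      rw [smul_add]
      abel)
  refine ⟨s, ?_⟩
  apply LinearMap.ext; intro m
  show g (s₀ m + f (h m)) = m
  have hf0 : g (f (h m)) = 0 :=
    LinearMap.mem_ker.mp (hfg ▸ LinearMap.mem_range_self f (h m))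
  rw [map_add, hgs, hf0, add_zero]

theorem aproj_of_Rproj (Q : Type) [AddCommGroup Q] [Module R Q]
    (hQ : Module.Projective R Q) : G.AProj Q := by
  classical
  letI aQ := G.amod Q
  letI aR := G.amod R
  obtain ⟨u, hu⟩ := Module.projective_def.mp hQ
  let uA : Q →ₗ[A] (Q →₀ R) :=
    { toFun := u, map_add' := map_add u, map_smul' := fun a x => u.map_smul (G.ρ a) x }
  let lcA : (Q →₀ R) →ₗ[A] Q :=
    { toFun := Finsupp.linearCombination R id,
      map_add' := map_add _,
      map_smul' := fun a x => (Finsupp.linearCombination R id).map_smul (G.ρ a) x }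
  let jR : R →ₗ[A] (Bool →₀ A) :=
    { toFun := fun r => Finsupp.single false (G.pA r) + Finsupp.single true (G.qA r)
      map_add' := by
        intro r s
        show Finsupp.single false (G.pA (r + s)) + Finsupp.single true (G.qA (r + s))
          = (Finsupp.single false (G.pA r) + Finsupp.single true (G.qA r))
            + (Finsupp.single false (G.pA s) + Finsupp.single true (G.qA s))
        rw [map_add, map_add, Finsupp.single_add, Finsupp.single_add]
        abel
      map_smul' := by
        intro a r
        show Finsupp.single false (G.pA (G.ρ a * r)) + Finsupp.single true (G.qA (G.ρ a * r))
          = a • (Finsupp.single false (G.pA r) + Finsupp.single true (G.qA r))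
        rw [G.axp1, G.axq1, smul_add, Finsupp.smul_single, Finsupp.smul_single,
          smul_eq_mul, smul_eq_mul] }
  let kR : (Bool →₀ A) →ₗ[A] R :=
    { toFun := fun c => G.ρ (c false) + G.e * G.ρ (c true)
      map_add' := by
        intro c d
        show G.ρ ((c + d) false) + G.e * G.ρ ((c + d) true)
          = (G.ρ (c false) + G.e * G.ρ (c true)) + (G.ρ (d false) + G.e * G.ρ (d true))
        rw [Finsupp.add_apply, Finsupp.add_apply, map_add, map_add, mul_add]
        abel
      map_smul' := by
        intro a c
        show G.ρ ((a • c) false) + G.e * G.ρ ((a • c) true)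
          = G.ρ a * (G.ρ (c false) + G.e * G.ρ (c true))
        rw [Finsupp.smul_apply, Finsupp.smul_apply, smul_eq_mul, smul_eq_mul, map_mul,
          map_mul, mul_add, ← mul_assoc, ← mul_assoc, G.hc (G.ρ a)] }
  have hkj : ∀ r : R, kR (jR r) = r := by
    intro r
    show G.ρ ((Finsupp.single false (G.pA r) + Finsupp.single true (G.qA r)) false)
        + G.e * G.ρ ((Finsupp.single false (G.pA r) + Finsupp.single true (G.qA r)) true) = r
    rw [Finsupp.add_apply, Finsupp.add_apply, Finsupp.single_eq_same, Finsupp.single_eq_same,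
      Finsupp.single_eq_of_ne (show (false : Bool) ≠ true by decide),
      Finsupp.single_eq_of_ne (show (true : Bool) ≠ false by decide), add_zero, zero_add]
    exact (G.axd r).symm
  let J : (Q →₀ R) →ₗ[A] (Q →₀ (Bool →₀ A)) := Finsupp.mapRange.linearMap jR
  let K : (Q →₀ (Bool →₀ A)) →ₗ[A] (Q →₀ R) := Finsupp.mapRange.linearMap kR
  have hKJ : ∀ c : Q →₀ R, K (J c) = c := by
    intro c
    ext w
    rw [Finsupp.mapRange.linearMap_apply, Finsupp.mapRange.linearMap_apply,
      Finsupp.mapRange_apply, Finsupp.mapRange_apply, hkj]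
  show Module.Projective A Q
  refine Module.Projective.of_split
    ((Finsupp.finsuppProdLEquiv (α := Q) (β := Bool) A (M := A)).symm.toLinearMap ∘ₗ J ∘ₗ uA)
    (lcA ∘ₗ K ∘ₗ (Finsupp.finsuppProdLEquiv (α := Q) (β := Bool) A (M := A)).toLinearMap) ?_
  apply LinearMap.ext
  intro x
  show lcA (K ((Finsupp.finsuppProdLEquiv (α := Q) (β := Bool) A (M := A))
    ((Finsupp.finsuppProdLEquiv (α := Q) (β := Bool) A (M := A)).symm (J (uA x))))) = x
  rw [LinearEquiv.apply_symm_apply, hKJ]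
  exact hu x

theorem aproj_of_embedding (Q : Type) [AddCommGroup Q] [Module R Q]
    (hQ : Module.Projective R Q) (ι₀ : V →ₗ[R] Q) (hinj : Function.Injective ι₀)
    (hHer : ∀ (P : Type) (_ : AddCommGroup P) (_ : Module A P),
      Module.Projective A P → ∀ N : Submodule A P, Module.Projective A N) :
    G.AProj V := by
  letI aQ := G.amod Q
  letI aV := G.amod V
  have hQA : Module.Projective A Q := G.aproj_of_Rproj Q hQ
  let ιA : V →ₗ[A] Q :=
    { toFun := ι₀, map_add' := map_add ι₀, map_smul' := fun a x => ι₀.map_smul (G.ρ a) x }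
  haveI hN : Module.Projective A (LinearMap.range ιA) := hHer Q inferInstance aQ hQA _
  show Module.Projective A V
  exact Module.Projective.of_equiv (LinearEquiv.ofInjective ιA (by exact hinj)).symm

theorem exists_sigma (hV : G.AProj V)
    (hHer : ∀ (P : Type) (_ : AddCommGroup P) (_ : Module A P),
      Module.Projective A P → ∀ N : Submodule A P, Module.Projective A N) :
    ∃ σ : V → V, (∀ x y, σ (x + y) = σ x + σ y)
      ∧ (∀ (a : A) (x : V), σ (G.ρ a • x) = G.ρ a • σ x)
      ∧ (∀ x, σ (G.e • x) = -(G.e • σ x)) ∧ (∀ x, σ (σ x) = x) := by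
  classical
  letI aV := G.amod V
  haveI hVP : Module.Projective A V := hV
  let eV : V →ₗ[A] V :=
    { toFun := fun m => G.e • m, map_add' := fun x y => smul_add _ _ _,
      map_smul' := fun a m => G.esmul_comm (G.ρ a) m }
  haveI hI : Module.Projective A (LinearMap.range eV) := hHer V inferInstance aV hVP _
  obtain ⟨ρ', hρ'⟩ := Module.projective_lifting_property eV.rangeRestrict
    (LinearMap.id (R := A) (M := LinearMap.range eV)) (LinearMap.surjective_rangeRestrict eV)
  have hρ'id : ∀ x : LinearMap.range eV, eV.rangeRestrict (ρ' x) = x := fun x =>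
    LinearMap.congr_fun hρ' x
  have hre : ∀ m, G.e • (ρ' (eV.rangeRestrict m)) = G.e • m := by
    intro m
    exact congrArg Subtype.val (hρ'id (eV.rangeRestrict m))
  refine ⟨fun m => m - (ρ' (eV.rangeRestrict m) + ρ' (eV.rangeRestrict m)), ?_, ?_, ?_, ?_⟩
  · intro x y
    simp only [map_add]
    abel
  · intro a x
    have h1 : ρ' (eV.rangeRestrict (G.ρ a • x)) = G.ρ a • ρ' (eV.rangeRestrict x) := by
      have e1 : eV.rangeRestrict (G.ρ a • x) = a • eV.rangeRestrict x :=
        eV.rangeRestrict.map_smul a x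
      rw [e1]
      exact ρ'.map_smul a _
    show G.ρ a • x - (ρ' (eV.rangeRestrict (G.ρ a • x)) + ρ' (eV.rangeRestrict (G.ρ a • x)))
      = G.ρ a • (x - (ρ' (eV.rangeRestrict x) + ρ' (eV.rangeRestrict x)))
    rw [h1, smul_sub, smul_add]
  · intro x
    have h0 : eV.rangeRestrict (G.e • x) = 0 := by
      apply Subtype.coe_injective
      show G.e • (G.e • x) = (0 : V)
      rw [← mul_smul, G.he2, zero_smul]
    show G.e • x - (ρ' (eV.rangeRestrict (G.e • x)) + ρ' (eV.rangeRestrict (G.e • x)))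
      = -(G.e • (x - (ρ' (eV.rangeRestrict x) + ρ' (eV.rangeRestrict x))))
    rw [h0, map_zero, smul_sub, smul_add, hre]
    abel
  · intro x
    have h4 : eV.rangeRestrict (x - (ρ' (eV.rangeRestrict x) + ρ' (eV.rangeRestrict x)))
        = -(eV.rangeRestrict x) := by
      rw [map_sub, map_add, hρ'id]
      abel
    show (x - (ρ' (eV.rangeRestrict x) + ρ' (eV.rangeRestrict x)))
        - (ρ' (eV.rangeRestrict (x - (ρ' (eV.rangeRestrict x) + ρ' (eV.rangeRestrict x))))
          + ρ' (eV.rangeRestrict (x - (ρ' (eV.rangeRestrict x) + ρ' (eV.rangeRestrict x))))) = x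
    rw [h4, map_neg]
    abel

end GoodExt

section Concrete

variable (k A : Type) [Field k] [Ring A] [Algebra k A]

open scoped TensorProduct

/-- The "coefficient of 1" projection `A ⊗ₖ k[ε] → A`. -/
def pL : TensorProduct k A (DualNumber k) →ₗ[k] A :=
  (TensorProduct.rid k A).toLinearMap ∘ₗ
    TensorProduct.map LinearMap.id (TrivSqZeroExt.fstHom k k k).toLinearMap

/-- The "coefficient of ε" projection `A ⊗ₖ k[ε] → A`. -/
def qL : TensorProduct k A (DualNumber k) →ₗ[k] A :=
  (TensorProduct.rid k A).toLinearMap ∘ₗ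
    TensorProduct.map LinearMap.id (TrivSqZeroExt.sndHom k k)

@[simp] theorem pL_tmul (a : A) (w : DualNumber k) :
    pL k A (a ⊗ₜ[k] w) = w.fst • a := by
  simp [pL]

@[simp] theorem qL_tmul (a : A) (w : DualNumber k) :
    qL k A (a ⊗ₜ[k] w) = w.snd • a := by
  simp [qL]

theorem tz_mul_zero (x : TensorProduct k A (DualNumber k)) : x * 0 = 0 := mul_zero x

theorem tz_zero_mul (x : TensorProduct k A (DualNumber k)) : 0 * x = 0 := zero_mul x

/-- The concrete `GoodExt` structure for `Λ = A ⊗ₖ k[ε]`. -/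
noncomputable def concreteExt : GoodExt A (TensorProduct k A (DualNumber k)) where
  ρ := Algebra.TensorProduct.includeLeftRingHom
  e := (1 : A) ⊗ₜ[k] DualNumber.eps
  pA := (pL k A).toAddMonoidHom
  qA := (qL k A).toAddMonoidHom
  hc := by
    intro r
    induction r using TensorProduct.induction_on with
    | zero => simp [tz_mul_zero, tz_zero_mul]
    | tmul a w =>
        rw [Algebra.TensorProduct.tmul_mul_tmul, Algebra.TensorProduct.tmul_mul_tmul,
          one_mul, mul_one, mul_comm]
    | add x y hx hy => rw [mul_add, add_mul, hx, hy]
  axp1 := by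
    intro a r
    induction r using TensorProduct.induction_on with
    | zero => simp [tz_mul_zero, tz_zero_mul]
    | tmul a' w =>
        rw [Algebra.TensorProduct.includeLeftRingHom_apply,
          Algebra.TensorProduct.tmul_mul_tmul, one_mul]
        simp [mul_smul_comm]
    | add x y hx hy => simp only [mul_add, map_add, hx, hy]
  axq1 := by
    intro a r
    induction r using TensorProduct.induction_on with
    | zero => simp [tz_mul_zero, tz_zero_mul]
    | tmul a' w =>
        rw [Algebra.TensorProduct.includeLeftRingHom_apply,
          Algebra.TensorProduct.tmul_mul_tmul, one_mul]
        simp [mul_smul_comm]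
    | add x y hx hy => simp only [mul_add, map_add, hx, hy]
  axp2 := by
    intro r
    induction r using TensorProduct.induction_on with
    | zero => simp [tz_mul_zero, tz_zero_mul]
    | tmul a w =>
        rw [Algebra.TensorProduct.tmul_mul_tmul, one_mul]
        show pL k A (a ⊗ₜ[k] (DualNumber.eps * w)) = 0
        rw [pL_tmul, TrivSqZeroExt.fst_mul, DualNumber.fst_eps, zero_mul, zero_smul]
    | add x y hx hy => simp only [mul_add, map_add, hx, hy, add_zero]
  axq2 := by
    intro r
    induction r using TensorProduct.induction_on with
    | zero => simp [tz_mul_zero, tz_zero_mul]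
    | tmul a w =>
        rw [Algebra.TensorProduct.tmul_mul_tmul, one_mul]
        show qL k A (a ⊗ₜ[k] (DualNumber.eps * w)) = pL k A (a ⊗ₜ[k] w)
        rw [qL_tmul, pL_tmul, TrivSqZeroExt.snd_mul, DualNumber.fst_eps, DualNumber.snd_eps]
        simp
    | add x y hx hy => simp only [mul_add, map_add, hx, hy]
  axd := by
    intro r
    induction r using TensorProduct.induction_on with
    | zero => simp [tz_mul_zero, tz_zero_mul]
    | tmul a w =>
        rw [Algebra.TensorProduct.includeLeftRingHom_apply,
          Algebra.TensorProduct.includeLeftRingHom_apply]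
        simp only [LinearMap.toAddMonoidHom_coe, pL_tmul, qL_tmul]
        rw [Algebra.TensorProduct.tmul_mul_tmul, one_mul, mul_one,
          TensorProduct.smul_tmul, TensorProduct.smul_tmul, ← TensorProduct.tmul_add]
        congr 1
        rw [show (w.fst • (1 : DualNumber k)) = TrivSqZeroExt.inl w.fst by
            rw [← TrivSqZeroExt.algebraMap_eq_inl (R' := k) (M := k)]
            exact (Algebra.algebraMap_eq_smul_one w.fst).symm,
          show (w.snd • DualNumber.eps : DualNumber k) = TrivSqZeroExt.inr w.snd by
            rw [DualNumber.eps, ← TrivSqZeroExt.inr_smul, smul_eq_mul, mul_one]]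
        exact (TrivSqZeroExt.inl_fst_add_inr_snd_eq w).symm
    | add x y hx hy =>
        rw [map_add, map_add, map_add, map_add, mul_add]
        conv_lhs => rw [hx, hy]
        abel
  axp3 := by
    rw [Algebra.TensorProduct.one_def]
    simp
  axq3 := by
    rw [Algebra.TensorProduct.one_def]
    simp

end Concrete
end SGPaux

/-- Let `A` be a finite dimensional hereditary `k`-algebra (such as the path
algebra of a finite connected acyclic quiver) and `Λ = A ⊗_k k[ε]`.  If `V` is a
torsionless finitely generated left `Λ`-module (i.e. `V` embeds into a projective
`Λ`-module), then `V` is strongly Gorenstein-projective. -/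
theorem stmt_12 (k : Type) [Field k] (A : Type) [Ring A] [Algebra k A]
    [FiniteDimensional k A]
    (hHer : ∀ (P : Type) (_ : AddCommGroup P) (_ : Module A P),
      Module.Projective A P → ∀ N : Submodule A P, Module.Projective A N)
    (V : Type) [AddCommGroup V] [Module (TensorProduct k A (DualNumber k)) V]
    [Module.Finite (TensorProduct k A (DualNumber k)) V]
    (htl : ∃ (P : Type) (_ : AddCommGroup P) (_ : Module (TensorProduct k A (DualNumber k)) P),
        Module.Projective (TensorProduct k A (DualNumber k)) P ∧
        ∃ ι : @LinearMap (TensorProduct k A (DualNumber k)) (TensorProduct k A (DualNumber k)) _ _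
          (RingHom.id (TensorProduct k A (DualNumber k))) V P _ _ _ _, Function.Injective ι) :
    IsStronglyGorensteinProjective (TensorProduct k A (DualNumber k)) V := by
  classical
  let G := concreteExt k A
  obtain ⟨Q, iQ, mQ, hQproj, ι₀, hι₀⟩ := htl
  letI := iQ
  letI := mQ
  have hV : G.AProj V := G.aproj_of_embedding V Q hQproj ι₀ hι₀ hHer
  obtain ⟨σ, hσadd, hσρ, hσe, hσσ⟩ := G.exists_sigma V hV hHer
  constructor
  · exact G.part1 V hV σ hσadd hσρ hσe hσσ
  · intro P' iP' mP' hP'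
    letI := iP'
    letI := mP'
    intro E iE mE f g hf hg hfg
    exact G.part2 V hV P' hP' E iE mE f g hf hg hfg
end

section
/- Let A be a hereditary ring and Λ = A[ε] = A ⊗_ℤ ℤ[t]/(t^2) (so Λ = A[t]/(t^2)). Then every Λ-submodule of a projective Λ-module P satisfies Ext^1_Λ(V, Λ) = 0, i.e., torsionless implies Ext^1_Λ(V,Λ) = 0. -/
open TrivSqZeroExt

namespace Stmt18

variable {A : Type} [Ring A]

/-! ### Dual number arithmetic helpers -/

lemma inl_mul_eps (b : A) : (inl b : DualNumber A) * DualNumber.eps = inr b := by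
  rw [DualNumber.eps, inl_mul_inr, smul_eq_mul, mul_one]

lemma eps_mul_eq_inr (l : DualNumber A) :
    (DualNumber.eps : DualNumber A) * l = inr l.fst := by
  conv_lhs => rw [← inl_fst_add_inr_snd_eq l]
  rw [mul_add, DualNumber.eps, inr_mul_inl, inr_mul_inr, add_zero,
    MulOpposite.smul_eq_mul_unop, MulOpposite.unop_op, one_mul]

lemma eps_mul' (l : DualNumber A) :
    (DualNumber.eps : DualNumber A) * l = inl l.fst * DualNumber.eps := by
  rw [eps_mul_eq_inr, inl_mul_eps]

section SmulLemmas

variable {Y : Type} [AddCommGroup Y] [Module (DualNumber A) Y]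

lemma smul_decomp (l : DualNumber A) (y : Y) :
    l • y = (inl l.fst : DualNumber A) • y
      + (inl l.snd : DualNumber A) • ((DualNumber.eps : DualNumber A) • y) := by
  conv_lhs => rw [← inl_fst_add_inr_snd_eq l]
  rw [add_smul, ← inl_mul_eps, mul_smul]

lemma eps_smul_smul (l : DualNumber A) (y : Y) :
    (DualNumber.eps : DualNumber A) • (l • y)
      = (inl l.fst : DualNumber A) • ((DualNumber.eps : DualNumber A) • y) := by
  rw [← mul_smul, eps_mul', mul_smul]

end SmulLemmas

/-! ### The coinduced module `Hom_A(Λ, J) ≅ J × J` -/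

section Coind

variable (J : Type) [AddCommGroup J] [Module A J]

instance coindSMul : SMul (DualNumber A) (J × J) :=
  ⟨fun l x => (l.fst • x.1 + l.snd • x.2, l.fst • x.2)⟩

lemma coind_smul (l : DualNumber A) (x : J × J) :
    l • x = (l.fst • x.1 + l.snd • x.2, l.fst • x.2) := rfl

instance coindModule : Module (DualNumber A) (J × J) :=
  { coindSMul J with
    one_smul := fun x => by
      rw [coind_smul]
      simp
    mul_smul := fun l m x => by
      rw [coind_smul, coind_smul, coind_smul]
      refine Prod.ext ?_ ?_ <;>
        simp only [fst_mul, snd_mul, MulOpposite.smul_eq_mul_unop, MulOpposite.unop_op,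
          smul_eq_mul, mul_smul, add_smul, smul_add]
      · abel
    smul_zero := fun l => by
      rw [coind_smul]
      simp
    smul_add := fun l x y => by
      rw [coind_smul, coind_smul, coind_smul]
      refine Prod.ext ?_ ?_ <;> simp [smul_add] <;> abel
    add_smul := fun l m x => by
      rw [coind_smul, coind_smul, coind_smul]
      refine Prod.ext ?_ ?_ <;> simp [fst_add, snd_add, add_smul] <;> abel
    zero_smul := fun x => by
      rw [coind_smul]
      simp }

end Coind

/-- `Coind` is functorial: an `A`-linear map induces a `Λ`-linear map on coinduced modules. -/
def coindHom {J K : Type} [AddCommGroup J] [Module A J] [AddCommGroup K] [Module A K]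
    (q : J →ₗ[A] K) : (J × J) →ₗ[DualNumber A] (K × K) where
  toFun x := (q x.1, q x.2)
  map_add' x y := by simp
  map_smul' l x := by
    rw [RingHom.id_apply, coind_smul, coind_smul]
    simp

/-- The canonical `Λ`-linear embedding `Λ → Coind J` induced by an `A`-linear `j : A → J`. -/
def coindInl {J : Type} [AddCommGroup J] [Module A J] (j : A →ₗ[A] J) :
    DualNumber A →ₗ[DualNumber A] (J × J) where
  toFun l := (j l.snd, j l.fst)
  map_add' l m := by simp [fst_add, snd_add]
  map_smul' l m := by
    have jmul : ∀ a b : A, j (a * b) = a • j b := fun a b => by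
      rw [← smul_eq_mul, map_smul]
    rw [RingHom.id_apply, coind_smul]
    refine Prod.ext ?_ ?_
    · show j ((l * m).snd) = l.fst • j m.snd + l.snd • j m.fst
      rw [snd_mul, map_add, map_smul, MulOpposite.smul_eq_mul_unop, MulOpposite.unop_op, jmul]
    · show j ((l * m).fst) = l.fst • j m.fst
      rw [fst_mul, jmul]

/-- If `J` is an injective `A`-module, then `Coind J` is an injective `Λ`-module. -/
theorem coindInjective {J : Type} [AddCommGroup J] [Module A J]
    (hJ : Module.Injective A J) : Module.Injective (DualNumber A) (J × J) := by
  constructor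
  intro X Y _ _ _ _ m hm χ
  letI : Module A X := Module.compHom X (inlHom A A)
  letI : Module A Y := Module.compHom Y (inlHom A A)
  have hsX : ∀ (a : A) (x : X), a • x = (inl a : DualNumber A) • x := fun _ _ => rfl
  have hsY : ∀ (a : A) (y : Y), a • y = (inl a : DualNumber A) • y := fun _ _ => rfl
  let mA : X →ₗ[A] Y :=
    { toFun := m
      map_add' := map_add m
      map_smul' := fun a x => by
        show m (a • x) = a • m x
        rw [hsX, hsY]
        exact map_smul m _ _ }
  let χ1 : X →ₗ[A] J :=
    { toFun := fun x => (χ x).1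
      map_add' := fun x y => by
        show (χ (x + y)).1 = (χ x).1 + (χ y).1
        rw [map_add]; rfl
      map_smul' := fun a x => by
        show (χ (a • x)).1 = a • (χ x).1
        rw [hsX, map_smul, coind_smul]
        simp }
  obtain ⟨ψ, hψ⟩ := hJ.out mA hm χ1
  refine ⟨{ toFun := fun y => (ψ y, ψ ((DualNumber.eps : DualNumber A) • y)),
            map_add' := ?_, map_smul' := ?_ }, ?_⟩
  · intro y z
    show (ψ (y + z), ψ ((DualNumber.eps : DualNumber A) • (y + z)))
      = (ψ y, ψ ((DualNumber.eps : DualNumber A) • y))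
        + (ψ z, ψ ((DualNumber.eps : DualNumber A) • z))
    rw [smul_add, map_add, map_add]
    rfl
  · intro l y
    show (ψ (l • y), ψ ((DualNumber.eps : DualNumber A) • (l • y)))
      = l • (ψ y, ψ ((DualNumber.eps : DualNumber A) • y))
    rw [coind_smul]
    refine Prod.ext ?_ ?_
    · show ψ (l • y) = l.fst • ψ y + l.snd • ψ ((DualNumber.eps : DualNumber A) • y)
      rw [smul_decomp l y, map_add, ← hsY, ← hsY, map_smul, map_smul]
    · show ψ ((DualNumber.eps : DualNumber A) • l • y)
        = l.fst • ψ ((DualNumber.eps : DualNumber A) • y)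
      rw [eps_smul_smul, ← hsY, map_smul]
  · intro x
    show (ψ (m x), ψ ((DualNumber.eps : DualNumber A) • m x)) = χ x
    refine Prod.ext ?_ ?_
    · exact hψ x
    · show ψ ((DualNumber.eps : DualNumber A) • m x) = (χ x).2
      have h2 : (DualNumber.eps : DualNumber A) • m x = m ((DualNumber.eps : DualNumber A) • x) :=
        (map_smul m _ _).symm
      have h3 : (χ ((DualNumber.eps : DualNumber A) • x)).1 = (χ x).2 := by
        rw [map_smul, coind_smul]
        simp
      rw [h2]
      exact (hψ _).trans h3

/-! ### Quotients of injectives over a hereditary ring are injective -/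

theorem quot_injective
    (hHer : ∀ (P : Type) (_ : AddCommGroup P) (_ : Module A P),
      Module.Projective A P → ∀ N : Submodule A P, Module.Projective A N)
    {J : Type} [AddCommGroup J] [Module A J]
    (hJ : Module.Injective A J) (N : Submodule A J) : Module.Injective A (J ⧸ N) := by
  refine Module.Baer.injective ?_
  intro I φ
  haveI hProj : Module.Projective A I := hHer A inferInstance inferInstance inferInstance I
  obtain ⟨φ', hφ'⟩ := Module.projective_lifting_property N.mkQ φ (Submodule.mkQ_surjective N)
  obtain ⟨Ψ, hΨ⟩ := hJ.out I.subtype (Submodule.injective_subtype I) φ'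
  refine ⟨N.mkQ ∘ₗ Ψ, fun x mem => ?_⟩
  have h1 : N.mkQ (Ψ x) = N.mkQ (φ' ⟨x, mem⟩) := congrArg N.mkQ (hΨ ⟨x, mem⟩)
  have h2 : N.mkQ (φ' ⟨x, mem⟩) = φ ⟨x, mem⟩ := LinearMap.congr_fun hφ' ⟨x, mem⟩
  exact h1.trans h2

/-! ### Factoring through a surjection -/

theorem factor_thru {R E V W : Type} [Ring R] [AddCommGroup E] [AddCommGroup V] [AddCommGroup W]
    [Module R E] [Module R V] [Module R W] (g : E →ₗ[R] V) (hg : Function.Surjective g)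
    (k : E →ₗ[R] W) (hk : LinearMap.ker g ≤ LinearMap.ker k) :
    ∃ s : V →ₗ[R] W, ∀ e, s (g e) = k e := by
  let eqv := LinearMap.quotKerEquivOfSurjective g hg
  refine ⟨(Submodule.liftQ _ k hk) ∘ₗ (eqv.symm : V ≃ₗ[R] _).toLinearMap, fun e => ?_⟩
  have h1 : eqv (Submodule.Quotient.mk e) = g e := rfl
  have h2 : eqv.symm (g e) = Submodule.Quotient.mk e := by
    rw [← h1, LinearEquiv.symm_apply_apply]
  show (Submodule.liftQ _ k hk) (eqv.symm (g e)) = k e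
  rw [h2, Submodule.liftQ_apply]

/-- Existence of an injective `A`-module containing `A`. -/
theorem exists_injective_embedding (A : Type) [Ring A] :
    ∃ (J : Type) (_ : AddCommGroup J) (_ : Module A J)
      (j : A →ₗ[A] J), Function.Injective j ∧ Module.Injective A J := by
  let X : ModuleCat.{0} A := ModuleCat.of A A
  let U : ModuleCat.{0} A := CategoryTheory.Injective.under X
  refine ⟨↥U, inferInstance, inferInstance,
    (CategoryTheory.Injective.ι X).hom, ?_, ?_⟩
  · exact (ModuleCat.mono_iff_injective _).mp inferInstance
  · exact Module.injective_module_of_injective_object A _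
      (inj := CategoryTheory.Injective.injective_under X)

end Stmt18

/-- Let `A` be a hereditary ring (every submodule of a projective `A`-module
is projective) and `Λ = A[ε] = A[t]/(t²)` the dual numbers over `A`.  Then every finitely
generated `Λ`-submodule `V` of a projective `Λ`-module satisfies `Ext¹_Λ(V, Λ) = 0`:
torsionless implies `Ext¹_Λ(V, Λ) = 0`. -/
theorem stmt_18 (A : Type) [Ring A]
    (hHer : ∀ (P : Type) (_ : AddCommGroup P) (_ : Module A P),
      Module.Projective A P → ∀ N : Submodule A P, Module.Projective A N)
    (V : Type) [AddCommGroup V] [Module (DualNumber A) V]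
    [Module.Finite (DualNumber A) V]
    (P : Type) [AddCommGroup P] [Module (DualNumber A) P]
    [Module.Projective (DualNumber A) P]
    (ι : V →ₗ[DualNumber A] P) (hι : Function.Injective ι) :
    Ext1Vanishes (DualNumber A) V (DualNumber A) := by
  intro E aE mE f g hf hg hfg
  letI := aE
  letI := mE
  classical
  obtain ⟨J, iJ1, iJ2, j, hj, hJinj⟩ := Stmt18.exists_injective_embedding A
  letI := iJ1
  letI := iJ2
  set N : Submodule A J := LinearMap.range j with hN
  have hKinj : Module.Injective A (J ⧸ N) := Stmt18.quot_injective hHer hJinj N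
  have hI0 : Module.Injective (DualNumber A) (J × J) := Stmt18.coindInjective hJinj
  have hI1 : Module.Injective (DualNumber A) ((J ⧸ N) × (J ⧸ N)) := Stmt18.coindInjective hKinj
  set u : DualNumber A →ₗ[DualNumber A] J × J := Stmt18.coindInl j with hu_def
  have hu : Function.Injective u := by
    intro a b h
    have h1 : j a.snd = j b.snd := congrArg Prod.fst h
    have h2 : j a.fst = j b.fst := congrArg Prod.snd h
    exact TrivSqZeroExt.ext (hj h2) (hj h1)
  set p : (J × J) →ₗ[DualNumber A] (J ⧸ N) × (J ⧸ N) := Stmt18.coindHom N.mkQ with hp_def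
  have hmk0 : ∀ a : A, N.mkQ (j a) = 0 := fun a =>
    (Submodule.Quotient.mk_eq_zero N).mpr ⟨a, rfl⟩
  have hpu : ∀ l, p (u l) = 0 := by
    intro l
    show (N.mkQ (j l.snd), N.mkQ (j l.fst)) = 0
    rw [hmk0, hmk0]
    rfl
  have hker : ∀ x : J × J, p x = 0 → ∃ l, u l = x := by
    intro x hx
    have h1 : N.mkQ x.1 = 0 := congrArg Prod.fst hx
    have h2 : N.mkQ x.2 = 0 := congrArg Prod.snd hx
    obtain ⟨a, ha⟩ : x.1 ∈ N := (Submodule.Quotient.mk_eq_zero N).mp h1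
    obtain ⟨b, hb⟩ : x.2 ∈ N := (Submodule.Quotient.mk_eq_zero N).mp h2
    refine ⟨inl b + inr a, ?_⟩
    show (j (inl b + inr a : DualNumber A).snd, j (inl b + inr a : DualNumber A).fst) = x
    rw [snd_add, fst_add, snd_inl, snd_inr, fst_inl, fst_inr, zero_add, add_zero]
    exact Prod.ext ha hb
  -- Step 1: extend `u : Λ → I0` along `f : Λ → E` to `h : E → I0`.
  obtain ⟨h, hh⟩ := hI0.out f hf u
  -- Step 2: `p ∘ h` kills `ker g = range f`, so factors through `g` as `φ : V → I1`.
  obtain ⟨φ, hφ⟩ := Stmt18.factor_thru g hg (p ∘ₗ h) (by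
    intro e he
    rw [← hfg] at he
    obtain ⟨l, rfl⟩ := he
    show p (h (f l)) = 0
    rw [hh l]
    exact hpu l)
  -- Step 3: extend `φ` along `ι : V → P` to `Φ : P → I1`.
  obtain ⟨Φ, hΦ⟩ := hI1.out ι hι φ
  -- Step 4: lift `Φ` along the surjection `p : I0 → I1` using projectivity of `P`.
  have hpsurj : Function.Surjective p := by
    intro y
    obtain ⟨y1, hy1⟩ := Submodule.mkQ_surjective N y.1
    obtain ⟨y2, hy2⟩ := Submodule.mkQ_surjective N y.2
    exact ⟨(y1, y2), Prod.ext hy1 hy2⟩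
  obtain ⟨Ψ, hΨ⟩ := Module.projective_lifting_property p Φ hpsurj
  -- The difference lands in `range u`, giving a retraction `r : E → Λ` of `f`.
  set θ : E →ₗ[DualNumber A] J × J := h - (Ψ ∘ₗ ι ∘ₗ g) with hθ_def
  have hθmem : ∀ e, θ e ∈ LinearMap.range u := by
    intro e
    have : p (θ e) = 0 := by
      show p (h e - Ψ (ι (g e))) = 0
      rw [map_sub]
      have e1 : p (h e) = φ (g e) := (hφ e).symm
      have e2 : p (Ψ (ι (g e))) = Φ (ι (g e)) := LinearMap.congr_fun hΨ (ι (g e))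
      rw [e1, e2, hΦ, sub_self]
    obtain ⟨l, hl⟩ := hker (θ e) this
    exact ⟨l, hl⟩
  set θc : E →ₗ[DualNumber A] LinearMap.range u := θ.codRestrict _ hθmem with hθc_def
  set eqv := LinearEquiv.ofInjective u hu with heqv_def
  set r : E →ₗ[DualNumber A] DualNumber A := (eqv.symm : _ ≃ₗ[DualNumber A] _).toLinearMap ∘ₗ θc
    with hr_def
  have hur : ∀ e, u (r e) = θ e := by
    intro e
    have h1 : eqv (eqv.symm (θc e)) = θc e := eqv.apply_symm_apply _
    have h2 : (eqv (r e) : J × J) = u (r e) := LinearEquiv.ofInjective_apply u (r e)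
    rw [← h2]
    show ((eqv (eqv.symm (θc e))) : J × J) = θ e
    rw [h1]
    rfl
  have hgf : ∀ l, g (f l) = 0 := by
    intro l
    have : f l ∈ LinearMap.ker g := hfg ▸ LinearMap.mem_range_self f l
    exact this
  have hrf : ∀ l, r (f l) = l := by
    intro l
    apply hu
    rw [hur]
    show h (f l) - Ψ (ι (g (f l))) = u l
    rw [hh l, hgf l, map_zero, map_zero, sub_zero]
  -- Build the section of `g` from the retraction `r` of `f`.
  obtain ⟨s, hs⟩ := Stmt18.factor_thru g hg (LinearMap.id - f ∘ₗ r) (by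
    intro e he
    rw [← hfg] at he
    obtain ⟨l, rfl⟩ := he
    show f l - f (r (f l)) = 0
    rw [hrf l, sub_self])
  refine ⟨s, ?_⟩
  apply LinearMap.ext
  intro v
  obtain ⟨e, rfl⟩ := hg v
  show g (s (g e)) = g e
  rw [hs e]
  show g (e - f (r e)) = g e
  rw [map_sub, hgf (r e), sub_zero]
end
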